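/- arXiv:2205.15168 — 8 statements merged into one kernel-verified Lean document; each statement's English description precedes it below -/
import Mathlib

section
/- Let K be an algebraically closed field and k ≥ 3 an integer. Then there exists a real constant c > 0 such that for every positive integer n there is a nonempty Zariski-open subset U of the space K^{n,…,n} of k-tensors with all sides equal to n such that every T ∈ U satisfies Q(T) ≥ c · n^{1/(k−1)}. (Lower bound on the generic subrank of k-tensors.) -/
/-- The space of order-`k` tensors of format `n` over `K`. -/
abbrev TensorK (K : Type*) {k : ℕ} (n : Fin k → ℕ) : Type _ := (∀ j, Fin (n j)) → K

/-- `S` is a restriction of `T` (for order-`k` tensors). -/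
def RestrictK {K : Type*} [CommRing K] {k : ℕ} {m n : Fin k → ℕ}
    (S : TensorK K m) (T : TensorK K n) : Prop :=
  ∃ A : ∀ j, Matrix (Fin (m j)) (Fin (n j)) K,
    ∀ i, S i = ∑ a : ∀ j, Fin (n j), (∏ j, A j (i j) (a j)) * T a

/-- The order-`k` unit tensor `I_r`: ones on the main diagonal, zeroes elsewhere. -/
def unitTensorK (K : Type*) [CommRing K] (k r : ℕ) : TensorK K (fun _ : Fin k => r) :=
  fun i => if ∀ j j', i j = i j' then 1 else 0

/-- The subrank `Q(T)` of an order-`k` tensor: the largest `r` with `I_r ≤ T`. -/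
noncomputable def subrankK {K : Type*} [CommRing K] {k : ℕ} {n : Fin k → ℕ}
    (T : TensorK K n) : ℕ :=
  sSup {r : ℕ | RestrictK (unitTensorK K k r) T}

/-- A subset of `ι → K` is Zariski-closed if it is the common zero set of a family of
polynomials in the coordinates. -/
def IsZariskiClosed {K : Type*} [CommRing K] {ι : Type*} [Fintype ι]
    (Z : Set (ι → K)) : Prop :=
  ∃ P : Set (MvPolynomial ι K), Z = {x | ∀ p ∈ P, MvPolynomial.eval x p = 0}

/-- A subset is Zariski-open if its complement is Zariski-closed. -/
def IsZariskiOpen {K : Type*} [CommRing K] {ι : Type*} [Fintype ι]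
    (U : Set (ι → K)) : Prop :=
  IsZariskiClosed Uᶜ

/- ----------------- auxiliary material ----------------- -/

/-- The multi-index of the entry of `T` in row `t`, column `t'` of the big matrix. -/
def rowIdx {k n r : ℕ} (cst : Fin r → Fin n) (ε : (Fin (k-1) → Fin r) → Fin n)
    (t t' : Fin (k-1) → Fin r) : ∀ _ : Fin k, Fin n :=
  fun j => if h : (j : ℕ) < k - 1 then cst (t ⟨j, h⟩) else ε t'

/-- The `r^(k-1) × r^(k-1)` matrix of selected entries of a tensor `T`. -/
def Mmat {K : Type*} [CommRing K] {k n r : ℕ} (cst : Fin r → Fin n)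
    (ε : (Fin (k-1) → Fin r) → Fin n) (T : TensorK K (fun _ : Fin k => n)) :
    Matrix (Fin (k-1) → Fin r) (Fin (k-1) → Fin r) K :=
  Matrix.of fun t t' => T (rowIdx cst ε t t')

/-- If the unit tensor of size `s` restricts to a tensor of format `n^k` (`k ≥ 2`),
then `s ≤ n`. -/
lemma aux_subrank_le {K : Type*} [Field K] {k n s : ℕ} (hk : 2 ≤ k)
    {T : TensorK K (fun _ : Fin k => n)}
    (h : RestrictK (unitTensorK K k s) T) : s ≤ n := by
  classical
  obtain ⟨A, hA⟩ := h
  set j0 : Fin k := ⟨0, by omega⟩ with hj0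
  set j1 : Fin k := ⟨1, by omega⟩ with hj1
  set B : Matrix (Fin s) (Fin n) K := A j0 with hB
  set C : Matrix (Fin n) (Fin s) K := fun b l =>
    ∑ a : ∀ _ : Fin k, Fin n,
      (if a j0 = b then (∏ j ∈ Finset.univ.erase j0, A j l (a j)) * T a else 0) with hC
  have hBC : B * C = 1 := by
    ext i l
    set iv : Fin k → Fin s := fun j => if j = j0 then i else l with hiv
    have hprod : ∀ a : (∀ _ : Fin k, Fin n),
        (∏ j, A j (iv j) (a j))
          = B i (a j0) * ∏ j ∈ Finset.univ.erase j0, A j l (a j) := by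
      intro a
      rw [← Finset.mul_prod_erase Finset.univ _ (Finset.mem_univ j0)]
      congr 1
      refine Finset.prod_congr rfl fun j hj => ?_
      simp only [hiv]
      rw [if_neg (Finset.mem_erase.1 hj).1]
    have hmul : (B * C) i l = unitTensorK K k s iv := by
      rw [Matrix.mul_apply, hA iv]
      simp only [hC, Finset.mul_sum]
      rw [Finset.sum_comm]
      refine Finset.sum_congr rfl fun a _ => ?_
      rw [hprod a, mul_assoc]
      simp [mul_ite, Finset.sum_ite_eq]
    have hne : j1 ≠ j0 := by simp [hj0, hj1, Fin.ext_iff]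
    have hiff : (∀ j j', iv j = iv j') ↔ i = l := by
      constructor
      · intro hc
        have h01 := hc j0 j1
        simpa [hiv, hne] using h01
      · rintro rfl j j'
        simp [hiv]
    rw [hmul, Matrix.one_apply]
    simp only [unitTensorK]
    rw [if_congr hiff rfl rfl]
  have h1 : (B * C).rank = s := by rw [hBC, Matrix.rank_one, Fintype.card_fin]
  calc s = (B * C).rank := h1.symm
    _ ≤ B.rank := Matrix.rank_mul_le_left _ _
    _ ≤ Fintype.card (Fin n) := Matrix.rank_le_card_width _
    _ = n := Fintype.card_fin n


/-- If the selection matrix `Mmat` of `T` is invertible, then `I_r ≤ T`. -/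
lemma aux_restrict_of_isUnit_det {K : Type*} [Field K] {k n r : ℕ} (hk : 3 ≤ k)
    (cst : Fin r → Fin n) (ε : (Fin (k-1) → Fin r) → Fin n)
    (T : TensorK K (fun _ : Fin k => n))
    (hdet : IsUnit (Mmat cst ε T).det) :
    RestrictK (unitTensorK K k r) T := by
  classical
  have hjl : k - 1 < k := by omega
  set jl : Fin k := ⟨k - 1, hjl⟩ with hjl'
  set M : Matrix (Fin (k-1) → Fin r) (Fin (k-1) → Fin r) K := Mmat cst ε T with hMdef
  set N : Matrix (Fin (k-1) → Fin r) (Fin (k-1) → Fin r) K := M⁻¹ with hNdef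
  set Amat : ∀ _ : Fin k, Matrix (Fin r) (Fin n) K := fun j =>
    if j = jl then
      Matrix.of (fun l b => ∑ t' : Fin (k-1) → Fin r,
        (if b = ε t' then N t' (fun _ => l) else 0))
    else Matrix.of (fun x b => if b = cst x then 1 else 0) with hAmat
  refine ⟨Amat, ?_⟩
  intro i
  show unitTensorK K k r i
      = ∑ a : (∀ _ : Fin k, Fin n), (∏ j, Amat j (i j) (a j)) * T a
  set ti : Fin (k-1) → Fin r :=
    fun j' => i ⟨j'.1, Nat.lt_of_lt_of_le j'.2 (Nat.sub_le k 1)⟩ with hti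
  set e := Equiv.funSplitAt jl (Fin n) with hedef
  set g0 : {j : Fin k // j ≠ jl} → Fin n := fun j => cst (i j.1) with hg0
  have h1 : ∀ p : Fin n × ({j : Fin k // j ≠ jl} → Fin n), (e.symm p) jl = p.1 :=
    fun p => congrArg Prod.fst (e.apply_symm_apply p)
  have h2 : ∀ (p : Fin n × ({j : Fin k // j ≠ jl} → Fin n)) (j : {j : Fin k // j ≠ jl}),
      (e.symm p) j.1 = p.2 j :=
    fun p j => congrFun (congrArg Prod.snd (e.apply_symm_apply p)) j
  -- Step 1: compute the product of the A-entries
  have hprod : ∀ (b : Fin n) (g : {j : Fin k // j ≠ jl} → Fin n),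
      (∏ j, Amat j (i j) ((e.symm (b, g)) j))
        = (if g = g0 then 1 else 0) * Amat jl (i jl) b := by
    intro b g
    rw [← Finset.mul_prod_erase Finset.univ _ (Finset.mem_univ jl)]
    rw [mul_comm]
    congr 1
    · rw [Finset.prod_subtype (p := fun x => x ≠ jl) (F := inferInstance) (Finset.univ.erase jl)
        (fun x => by simp : ∀ x, x ∈ Finset.univ.erase jl ↔ x ≠ jl)
        (fun j => Amat j (i j) ((e.symm (b, g)) j))]
      have : ∀ j : {j : Fin k // j ≠ jl},
          Amat j.1 (i j.1) ((e.symm (b, g)) j.1)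
            = if g j = g0 j then 1 else 0 := by
        intro j
        rw [h2 (b, g) j]
        simp only [hAmat, if_neg j.2, Matrix.of_apply, hg0]
      rw [Finset.prod_congr rfl fun j _ => this j, Finset.prod_boole]
      simp [funext_iff]
    · rw [h1 (b, g)]
  -- Step 2: collapse the sum
  have hsum : (∑ a : (∀ _ : Fin k, Fin n), (∏ j, Amat j (i j) (a j)) * T a)
      = (M * N) ti (fun _ => i jl) := by
    rw [← Equiv.sum_comp e.symm
      (fun a : (∀ _ : Fin k, Fin n) => (∏ j, Amat j (i j) (a j)) * T a)]
    rw [Fintype.sum_prod_type]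
    have hg : ∀ b : Fin n,
        (∑ g : {j : Fin k // j ≠ jl} → Fin n,
          (∏ j, Amat j (i j) ((e.symm (b, g)) j)) * T (e.symm (b, g)))
          = Amat jl (i jl) b * T (e.symm (b, g0)) := by
      intro b
      have : ∀ g, (∏ j, Amat j (i j) ((e.symm (b, g)) j)) * T (e.symm (b, g))
          = if g = g0 then Amat jl (i jl) b * T (e.symm (b, g0)) else 0 := by
        intro g
        rw [hprod b g]
        by_cases hgg : g = g0
        · subst hgg; simp
        · simp [hgg]
      rw [Finset.sum_congr rfl fun g _ => this g]
      simp
    rw [Finset.sum_congr rfl fun b _ => hg b]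
    have hA : ∀ b, Amat jl (i jl) b
        = ∑ t' : Fin (k-1) → Fin r, (if b = ε t' then N t' (fun _ => i jl) else 0) := by
      intro b
      simp [hAmat]
    have hrw : ∀ b : Fin n, Amat jl (i jl) b * T (e.symm (b, g0))
        = ∑ t' : Fin (k-1) → Fin r,
            (if b = ε t' then N t' (fun _ => i jl) * T (e.symm (b, g0)) else 0) := by
      intro b
      rw [hA b, Finset.sum_mul]
      exact Finset.sum_congr rfl fun t' _ => by rw [ite_mul, zero_mul]
    rw [Finset.sum_congr rfl fun b _ => hrw b, Finset.sum_comm]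
    have hcol : ∀ t' : Fin (k-1) → Fin r,
        (∑ b : Fin n, if b = ε t' then N t' (fun _ => i jl) * T (e.symm (b, g0)) else 0)
          = M ti t' * N t' (fun _ => i jl) := by
      intro t'
      rw [Finset.sum_ite_eq' Finset.univ (ε t')
        (fun b => N t' (fun _ => i jl) * T (e.symm (b, g0)))]
      rw [if_pos (Finset.mem_univ _), mul_comm (M ti t') (N t' (fun _ => i jl))]
      congr 1
      show T (e.symm (ε t', g0)) = T (rowIdx cst ε ti t')
      congr 1
      funext j
      by_cases hj : j = jl
      · subst hj
        rw [h1 (ε t', g0)]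
        simp only [rowIdx]
        rw [dif_neg (by simp [hjl'] : ¬ ((jl : ℕ) < k - 1))]
      · have hjlt : (j : ℕ) < k - 1 := by
          have := j.2
          have : (j : ℕ) ≠ k - 1 := fun hc => hj (Fin.ext hc)
          omega
        rw [h2 (ε t', g0) ⟨j, hj⟩]
        simp only [rowIdx, hg0]
        rw [dif_pos hjlt]
    rw [Finset.sum_congr rfl fun t' _ => hcol t', Matrix.mul_apply]
  rw [hsum, hNdef, Matrix.mul_nonsing_inv M hdet, Matrix.one_apply]
  simp only [unitTensorK]
  refine if_congr ?_ rfl rfl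
  constructor
  · intro hc
    funext j'
    exact hc _ jl
  · intro hc j j'
    have key : ∀ j : Fin k, i j = i jl := by
      intro j
      by_cases hj : j = jl
      · rw [hj]
      · have hjlt : (j : ℕ) < k - 1 := by
          have := j.2
          have : (j : ℕ) ≠ k - 1 := fun hcc => hj (Fin.ext hcc)
          omega
        have h3 := congrFun hc ⟨j.1, hjlt⟩
        simp only [hti] at h3
        exact (congrArg i (Fin.ext rfl)).trans h3
    rw [key j, key j']


/-- The explicit witness tensor whose selection matrix is the identity. -/
lemma aux_Mmat_witness {K : Type*} [Field K] {k n r : ℕ} (hk : 1 ≤ k)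
    (cst : Fin r → Fin n) (hcst : Function.Injective cst)
    (ε : (Fin (k-1) → Fin r) → Fin n) (hε : Function.Injective ε) :
    Mmat (K := K) cst ε
      (fun x => ∑ t : Fin (k-1) → Fin r, if x = rowIdx cst ε t t then 1 else 0) = 1 := by
  classical
  ext t t'
  show (∑ s : Fin (k-1) → Fin r,
      if rowIdx cst ε t t' = rowIdx cst ε s s then (1:K) else 0) = (1 : Matrix _ _ K) t t'
  have hiff : ∀ s, rowIdx cst ε t t' = rowIdx (k := k) cst ε s s ↔ (t = s ∧ t' = s) := by
    intro s
    constructor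
    · intro h
      constructor
      · funext j'
        have hlt : (j' : ℕ) < k := Nat.lt_of_lt_of_le j'.2 (Nat.sub_le k 1)
        have h3 := congrFun h ⟨j'.1, hlt⟩
        simp only [rowIdx] at h3
        rw [dif_pos (j'.2 : ((⟨j'.1, hlt⟩ : Fin k) : ℕ) < k - 1),
          dif_pos (j'.2 : ((⟨j'.1, hlt⟩ : Fin k) : ℕ) < k - 1)] at h3
        exact hcst h3
      · have hlt : k - 1 < k := by omega
        have h3 := congrFun h ⟨k - 1, hlt⟩
        simp only [rowIdx] at h3
        rw [dif_neg (Nat.lt_irrefl (k-1) : ¬ (((⟨k - 1, hlt⟩ : Fin k) : ℕ) < k - 1)),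
          dif_neg (Nat.lt_irrefl (k-1) : ¬ (((⟨k - 1, hlt⟩ : Fin k) : ℕ) < k - 1))] at h3
        exact hε h3
    · rintro ⟨rfl, rfl⟩; rfl
  rw [Finset.sum_congr rfl (fun s _ => by rw [if_congr (hiff s) rfl rfl])]
  by_cases htt : t = t'
  · subst htt
    rw [Matrix.one_apply_eq]
    simp only [and_self]
    rw [Finset.sum_ite_eq Finset.univ t (fun _ => (1:K)), if_pos (Finset.mem_univ _)]
  · rw [Matrix.one_apply_ne htt]
    exact Finset.sum_eq_zero fun s _ =>
      if_neg (fun hc => htt (hc.1.trans hc.2.symm))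

/-- The nonvanishing locus of the selection determinant is Zariski-open. -/
lemma aux_open {K : Type*} [Field K] {k n r : ℕ}
    (cst : Fin r → Fin n) (ε : (Fin (k-1) → Fin r) → Fin n) :
    IsZariskiOpen {T : TensorK K (fun _ : Fin k => n) | (Mmat cst ε T).det ≠ 0} := by
  classical
  refine ⟨{(Matrix.of (fun t t' : Fin (k-1) → Fin r =>
    (MvPolynomial.X (rowIdx cst ε t t') :
      MvPolynomial (∀ _ : Fin k, Fin n) K))).det}, ?_⟩
  ext T
  have heval : MvPolynomial.eval T ((Matrix.of (fun t t' : Fin (k-1) → Fin r =>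
      (MvPolynomial.X (rowIdx cst ε t t') :
        MvPolynomial (∀ _ : Fin k, Fin n) K))).det) = (Mmat cst ε T).det := by
    rw [RingHom.map_det]
    congr 1
    ext t t'
    simp [Mmat, RingHom.mapMatrix_apply]
  simp only [Set.mem_compl_iff, Set.mem_setOf_eq, not_not, Set.mem_singleton_iff,
    forall_eq, heval]

/-- Lower bound on the generic subrank of `k`-tensors: there is a constant `c > 0`
such that generically `Q(T) ≥ c · n^{1/(k−1)}`. -/
theorem generic_subrank_lower_bound_k (K : Type*) [Field K] [IsAlgClosed K]
    (k : ℕ) (hk : 3 ≤ k) :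
    ∃ c : ℝ, 0 < c ∧ ∀ n : ℕ, 0 < n →
      ∃ U : Set (TensorK K (fun _ : Fin k => n)),
        U.Nonempty ∧ IsZariskiOpen U ∧
          ∀ T ∈ U, c * (n : ℝ) ^ ((1 : ℝ) / (k - 1)) ≤ (subrankK T : ℝ) := by
  classical
  refine ⟨1/2, by norm_num, ?_⟩
  intro n hn
  have hm2 : 2 ≤ k - 1 := by omega
  have hcast : ((k - 1 : ℕ) : ℝ) = (k : ℝ) - 1 := by
    rw [Nat.cast_sub (by omega : 1 ≤ k), Nat.cast_one]
  set x : ℝ := (n : ℝ) ^ ((1 : ℝ) / ((k - 1 : ℕ) : ℝ)) with hx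
  have hn1 : (1 : ℝ) ≤ (n : ℝ) := by exact_mod_cast hn
  have hmR : (0 : ℝ) < ((k - 1 : ℕ) : ℝ) := by
    have : (0 : ℕ) < k - 1 := by omega
    exact_mod_cast this
  have hx1 : 1 ≤ x := by
    rw [hx]
    calc (1 : ℝ) = (1 : ℝ) ^ ((1 : ℝ) / ((k - 1 : ℕ) : ℝ)) := (Real.one_rpow _).symm
      _ ≤ (n : ℝ) ^ ((1 : ℝ) / ((k - 1 : ℕ) : ℝ)) :=
          Real.rpow_le_rpow zero_le_one hn1 (by positivity)
  set r : ℕ := ⌊x⌋₊ with hr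
  have hr1 : 1 ≤ r := Nat.le_floor (by exact_mod_cast hx1)
  have hrx : (r : ℝ) ≤ x := Nat.floor_le (by linarith)
  have hrm : r ^ (k - 1) ≤ n := by
    have h1 : ((r : ℝ)) ^ (k - 1) ≤ x ^ (k - 1) :=
      pow_le_pow_left₀ (by positivity) hrx (k - 1)
    have h2 : x ^ (k - 1) = (n : ℝ) := by
      rw [hx, ← Real.rpow_natCast ((n : ℝ) ^ ((1 : ℝ) / ((k - 1 : ℕ) : ℝ))) (k - 1),
        ← Real.rpow_mul (by positivity),
        one_div_mul_cancel (ne_of_gt hmR), Real.rpow_one]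
    have h3 : ((r ^ (k - 1) : ℕ) : ℝ) ≤ (n : ℝ) := by
      push_cast
      rw [← h2]
      exact h1
    exact_mod_cast h3
  have hrn : r ≤ n := le_trans (Nat.le_self_pow (by omega) r) hrm
  have hcard : Fintype.card (Fin (k - 1) → Fin r) ≤ Fintype.card (Fin n) := by
    simp only [Fintype.card_fun, Fintype.card_fin]
    exact hrm
  obtain ⟨ε⟩ := Function.Embedding.nonempty_of_card_le hcard
  set cst : Fin r → Fin n := Fin.castLE hrn with hcst
  refine ⟨{T : TensorK K (fun _ : Fin k => n) | (Mmat cst (⇑ε) T).det ≠ 0}, ?_, aux_open cst ⇑ε, ?_⟩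
  · refine ⟨(fun y => ∑ t : Fin (k-1) → Fin r, if y = rowIdx cst (⇑ε) t t then 1 else 0), ?_⟩
    show (Mmat cst (⇑ε) _).det ≠ 0
    rw [aux_Mmat_witness (by omega : 1 ≤ k) cst (Fin.castLE_injective hrn) (⇑ε) ε.injective, Matrix.det_one]
    exact one_ne_zero
  · intro T hT
    have hres : RestrictK (unitTensorK K k r) T :=
      aux_restrict_of_isUnit_det hk cst (⇑ε) T (isUnit_iff_ne_zero.2 hT)
    have hbdd : BddAbove {s | RestrictK (unitTensorK K k s) T} :=
      ⟨n, fun s hs => aux_subrank_le (by omega) hs⟩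
    have hsub : r ≤ subrankK T := le_csSup hbdd hres
    have hsubR : (r : ℝ) ≤ (subrankK T : ℝ) := by exact_mod_cast hsub
    have hxlt : x < r + 1 := Nat.lt_floor_add_one x
    have hrr : (1 : ℝ) ≤ (r : ℝ) := by exact_mod_cast hr1
    have hgoal : (1/2 : ℝ) * x ≤ (r : ℝ) := by linarith
    calc (1/2 : ℝ) * (n : ℝ) ^ ((1 : ℝ) / ((k : ℝ) - 1))
        = (1/2 : ℝ) * x := by rw [hx, hcast]
      _ ≤ (r : ℝ) := hgoal
      _ ≤ (subrankK T : ℝ) := hsubR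
end

section
/- Let K be an infinite field. There exist linear subspaces X₁, X₂, X₃ ⊆ Mat_{3,3}, each of dimension 3, such that X₁[1] + X₂[2] + X₃[3] = K^{3,3,3}. -/
set_option linter.unusedVariables false
set_option maxHeartbeats 1000000
set_option maxRecDepth 10000

/-- The space of 3-tensors of format `n₁ × n₂ × n₃` over `K`. -/
abbrev Tensor3 (K : Type*) (n₁ n₂ n₃ : ℕ) : Type _ := Fin n₁ × Fin n₂ × Fin n₃ → K

/-- `X[1]`: the subspace of tensors all of whose first-direction slices lie in `X`. -/
def sliceSub1 {K : Type*} [Field K] {n₁ n₂ n₃ : ℕ}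
    (X : Submodule K (Matrix (Fin n₂) (Fin n₃) K)) :
    Submodule K (Tensor3 K n₁ n₂ n₃) where
  carrier := {T | ∀ i, Matrix.of (fun j k => T (i, j, k)) ∈ X}
  add_mem' := fun hS hT i => X.add_mem (hS i) (hT i)
  zero_mem' := fun i => X.zero_mem
  smul_mem' := fun c S hS i => X.smul_mem c (hS i)

/-- `X[2]`: the subspace of tensors all of whose second-direction slices lie in `X`. -/
def sliceSub2 {K : Type*} [Field K] {n₁ n₂ n₃ : ℕ}
    (X : Submodule K (Matrix (Fin n₁) (Fin n₃) K)) :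
    Submodule K (Tensor3 K n₁ n₂ n₃) where
  carrier := {T | ∀ j, Matrix.of (fun i k => T (i, j, k)) ∈ X}
  add_mem' := fun hS hT j => X.add_mem (hS j) (hT j)
  zero_mem' := fun j => X.zero_mem
  smul_mem' := fun c S hS j => X.smul_mem c (hS j)

/-- `X[3]`: the subspace of tensors all of whose third-direction slices lie in `X`. -/
def sliceSub3 {K : Type*} [Field K] {n₁ n₂ n₃ : ℕ}
    (X : Submodule K (Matrix (Fin n₁) (Fin n₂) K)) :
    Submodule K (Tensor3 K n₁ n₂ n₃) where
  carrier := {T | ∀ k, Matrix.of (fun i j => T (i, j, k)) ∈ X}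
  add_mem' := fun hS hT k => X.add_mem (hS k) (hT k)
  zero_mem' := fun k => X.zero_mem
  smul_mem' := fun c S hS k => X.smul_mem c (hS k)

namespace T333Aux

def M1 : Fin 3 → Matrix (Fin 3) (Fin 3) ℤ :=
  ![!![1, 0, 0; 0, 0, 1; 0, 1, 1], !![0, 1, 0; 1, 0, 0; 1, 0, 0], !![0, 0, 1; 0, 0, 0; 0, 0, 0]]

def M2 : Fin 3 → Matrix (Fin 3) (Fin 3) ℤ :=
  ![!![1, 0, 0; 0, 1, 1; 0, 0, 0], !![0, 1, 0; 0, 0, 0; 0, 0, 1], !![0, 0, 1; 0, 0, 0; 1, 1, 0]]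

def M3 : Fin 3 → Matrix (Fin 3) (Fin 3) ℤ :=
  ![!![1, 0, 0; 1, 0, 0; 0, 0, 1], !![0, 1, 0; 1, 0, 0; 0, 0, 1], !![0, 0, 1; 0, 0, 1; 0, 1, 0]]

abbrev ι : Type := Fin 3 × Fin 3 × Fin 3

def Amat : Matrix ι ι ℤ := Matrix.of fun p q =>
  if p.1 = 0 then (if q.1 = p.2.1 then M1 p.2.2 q.2.1 q.2.2 else 0)
  else if p.1 = 1 then (if q.2.1 = p.2.1 then M2 p.2.2 q.1 q.2.2 else 0)
  else (if q.2.2 = p.2.1 then M3 p.2.2 q.1 q.2.1 else 0)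

def Blist : Matrix (Fin 27) (Fin 27) ℤ :=
  !![0, 1, 2, 0, 0, 0, 1, 1, -1, 0, 1, -1, 0, -2, -1, -1, -1, -1, 1, -1, 0, -2, 2, 1, -1, 1, 1;
    0, 0, 0, 0, 0, 0, 0, 0, -1, 0, 1, 0, 0, 0, 0, 0, 0, 0, 0, 0, 0, 0, 0, 0, 0, 0, 0;
    0, 0, 1, 0, 0, 0, 0, 0, 0, 0, 0, 0, 0, 0, 0, 0, 0, 0, 0, 0, 0, 0, 0, 0, 0, 0, 0;
    0, 1, 2, 0, 0, 0, 1, 1, -1, 0, 1, -1, 0, -2, -1, -1, -1, -1, 0, 0, 0, -2, 2, 1, -1, 1, 1;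
    0, 0, 0, 0, 0, 0, 0, 0, -1, 0, 1, 0, 0, 0, 0, 0, 0, 0, 0, 0, 0, -1, 1, 0, 0, 0, 0;
    0, 0, 1, 0, 0, 0, 0, 0, 0, 0, 0, 0, 0, 0, 0, 0, 0, 0, 0, 0, 0, 0, 0, 0, -1, 1, 0;
    0, 0, -2, 0, 0, 0, -1, -1, 2, 0, -2, 1, 0, 2, 1, 1, 1, 1, 0, 0, 0, 2, -2, -1, 1, -1, -1;
    0, 0, 1, 0, 0, 1, 0, 0, 0, 0, 0, 0, 0, 0, 0, 0, 1, 0, 0, 0, 0, 0, 0, 0, -1, 0, 0;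
    1, -1, -4, 0, 0, -1, -1, -1, 1, 0, -1, 1, 0, 2, 1, 1, 0, 1, -1, 1, 0, 2, -2, -1, 3, -2, -1;
    1, -1, -4, 0, 0, 0, -1, -1, 2, -1, -2, 1, 0, 2, 1, 1, 0, 0, 0, 1, 0, 3, -2, -1, 3, -2, -1;
    0, -1, -2, 0, 0, -1, -1, -1, 1, 1, -1, 1, 0, 2, 1, 1, 1, 1, -1, 1, 0, 2, -2, -1, 1, -1, -1;
    0, 0, 0, 0, 0, 1, 0, 0, 0, 0, 0, 0, 0, 0, 0, 0, 0, 0, 0, 0, 0, 0, 0, 0, 0, 0, 0;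
    1, 0, -2, 0, 1, 1, 0, 0, 1, -1, -1, 0, 0, 1, 1, 1, 0, 0, 0, 0, -1, 1, -1, -1, 2, -2, -1;
    1, -2, -4, -1, 0, 0, -1, -1, 1, -1, -1, 1, 1, 2, 1, 2, 0, 0, 0, 1, 0, 3, -2, -1, 3, -2, -1;
    -1, 1, 2, 1, 0, 0, 0, 0, 0, 1, 0, 0, 0, 0, 0, -1, 1, 1, 0, -1, 0, -1, 0, 0, -2, 1, 0;
    -1, 1, 4, 0, 0, 0, 1, 1, -2, 0, 2, -1, 0, -3, -2, -2, -1, -1, 1, -1, 1, -3, 3, 2, -3, 3, 2;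
    1, -1, -2, 0, 0, -1, 0, 0, 0, 0, 0, 0, 0, 1, 0, 1, -1, 0, -1, 1, 0, 1, -1, 0, 2, -1, -1;
    -1, 1, 4, 0, 0, 1, 1, 1, -2, 0, 2, -1, 0, -3, -1, -1, 0, -1, 1, -1, 0, -3, 3, 1, -3, 2, 2;
    0, -1, -1, 0, 0, 0, 0, -1, -1, 1, 1, 1, 0, 1, 1, 1, 1, 1, -1, 1, 0, 0, -1, -1, 0, -1, -1;
    0, 1, 0, 0, 0, 0, 0, 1, 1, -1, -1, 0, 0, -1, -1, -1, -1, -1, 1, -1, 0, 0, 1, 1, 0, 1, 1;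
    0, 0, 0, 0, 0, 0, 0, 0, 1, 0, 0, 0, 0, 0, 0, 0, 0, 0, 0, 0, 0, 0, 0, 0, 0, 0, 0;
    1, -1, -2, 0, 0, 0, 0, 0, 0, 0, 0, 0, 0, 1, 1, 1, 0, 0, -1, 1, 0, 1, -1, -1, 2, -2, -1;
    -1, 1, 1, 0, 0, 0, 0, 0, 0, 0, 0, 0, 0, -1, 0, -1, 0, 0, 1, -1, 0, -1, 1, 1, -1, 1, 1;
    0, 0, 0, 0, 0, 0, 0, 0, 1, 0, -1, 0, 0, 1, 0, 0, 0, 0, 0, 0, 0, 1, -1, 0, 0, 0, 0;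
    -1, 0, 2, 0, 0, 0, 0, 0, -1, 1, 1, 0, 0, 0, 0, 0, 1, 1, 0, 0, 0, -1, 0, 0, -2, 1, 0;
    0, 1, 2, 0, 0, 1, 1, 1, 0, -1, 0, -1, 0, -2, -1, -1, -1, -1, 1, -1, 0, -1, 2, 1, -1, 1, 1;
    0, 0, -1, 0, 0, -1, 0, 0, 0, 0, 0, 0, 0, 0, 0, 0, 0, 0, 0, 0, 0, 0, 0, 0, 1, 0, 0]

def enc (p : ι) : Fin 27 := ⟨9 * p.1.val + 3 * p.2.1.val + p.2.2.val, by omega⟩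

def Bmat : Matrix ι ι ℤ := Matrix.of fun p q => Blist (enc p) (enc q)

lemma hBA : Bmat * Amat = 1 := by decide

end T333Aux

open T333Aux in
/-- There exist 3-dimensional subspaces `X₁, X₂, X₃ ⊆ Mat_{3,3}` with
`X₁[1] + X₂[2] + X₃[3] = K^{3,3,3}`. -/
theorem tensor_space_decomposition_333 (K : Type*) [Field K] [Infinite K] :
    ∃ (X₁ X₂ X₃ : Submodule K (Matrix (Fin 3) (Fin 3) K)),
      Module.finrank K X₁ = 3 ∧ Module.finrank K X₂ = 3 ∧ Module.finrank K X₃ = 3 ∧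
      sliceSub1 (n₁ := 3) X₁ ⊔ sliceSub2 (n₂ := 3) X₂ ⊔ sliceSub3 (n₃ := 3) X₃ = ⊤ := by
  classical
  set f : ℤ →+* K := Int.castRingHom K with hf
  have li : ∀ (M : Fin 3 → Matrix (Fin 3) (Fin 3) ℤ),
      (∀ c d : Fin 3, M c 0 d = if c = d then 1 else 0) →
      LinearIndependent K (fun c => (M c).map (f : ℤ → K)) := by
    intro M hM
    rw [Fintype.linearIndependent_iff]
    intro g h d
    have h0 : (∑ c : Fin 3, g c • (M c).map (f : ℤ → K)) 0 d
        = (0 : Matrix (Fin 3) (Fin 3) K) 0 d := by rw [h]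
    simp only [Matrix.sum_apply, Matrix.smul_apply, Matrix.map_apply, Matrix.zero_apply,
      Fin.sum_univ_three, hM, smul_eq_mul] at h0
    fin_cases d <;> simp_all
  set X₁ : Submodule K (Matrix (Fin 3) (Fin 3) K) :=
    Submodule.span K (Set.range fun c => (M1 c).map (f : ℤ → K)) with hX₁
  set X₂ : Submodule K (Matrix (Fin 3) (Fin 3) K) :=
    Submodule.span K (Set.range fun c => (M2 c).map (f : ℤ → K)) with hX₂
  set X₃ : Submodule K (Matrix (Fin 3) (Fin 3) K) :=
    Submodule.span K (Set.range fun c => (M3 c).map (f : ℤ → K)) with hX₃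
  refine ⟨X₁, X₂, X₃, ?_, ?_, ?_, ?_⟩
  · rw [hX₁, finrank_span_eq_card (li M1 (by decide))]; simp
  · rw [hX₂, finrank_span_eq_card (li M2 (by decide))]; simp
  · rw [hX₃, finrank_span_eq_card (li M3 (by decide))]; simp
  · set S := sliceSub1 (n₁ := 3) X₁ ⊔ sliceSub2 (n₂ := 3) X₂ ⊔ sliceSub3 (n₃ := 3) X₃ with hS
    set Ak : Matrix ι ι K := Amat.map (f : ℤ → K) with hAk
    set Bk : Matrix ι ι K := Bmat.map (f : ℤ → K) with hBk
    have hBAK : Bk * Ak = 1 := by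
      rw [hAk, hBk, ← Matrix.map_mul, hBA, Matrix.map_one f f.map_zero f.map_one]
    have hrow : ∀ p : ι, (fun q => Ak p q) ∈ S := by
      rintro ⟨a, b, c⟩
      fin_cases a
      · refine Submodule.mem_sup_left (Submodule.mem_sup_left ?_)
        intro i
        by_cases hib : i = b
        · subst hib
          have : Matrix.of (fun j k => Ak (⟨0, by omega⟩, i, c) (i, j, k))
              = (M1 c).map (f : ℤ → K) := by
            ext j k
            simp [hAk, Amat, Matrix.map_apply]
          rw [this]
          exact Submodule.subset_span ⟨c, rfl⟩
        · have : Matrix.of (fun j k => Ak (⟨0, by omega⟩, b, c) (i, j, k))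
              = (0 : Matrix (Fin 3) (Fin 3) K) := by
            ext j k
            simp [hAk, Amat, Matrix.map_apply, hib]
          rw [this]
          exact X₁.zero_mem
      · refine Submodule.mem_sup_left (Submodule.mem_sup_right ?_)
        intro j
        by_cases hjb : j = b
        · subst hjb
          have : Matrix.of (fun i k => Ak (⟨1, by omega⟩, j, c) (i, j, k))
              = (M2 c).map (f : ℤ → K) := by
            ext i k
            simp [hAk, Amat, Matrix.map_apply]
          rw [this]
          exact Submodule.subset_span ⟨c, rfl⟩
        · have : Matrix.of (fun i k => Ak (⟨1, by omega⟩, b, c) (i, j, k))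
              = (0 : Matrix (Fin 3) (Fin 3) K) := by
            ext i k
            simp [hAk, Amat, Matrix.map_apply, hjb]
          rw [this]
          exact X₂.zero_mem
      · refine Submodule.mem_sup_right ?_
        intro k
        by_cases hkb : k = b
        · subst hkb
          have : Matrix.of (fun i j => Ak (⟨2, by omega⟩, k, c) (i, j, k))
              = (M3 c).map (f : ℤ → K) := by
            ext i j
            simp [hAk, Amat, Matrix.map_apply]
          rw [this]
          exact Submodule.subset_span ⟨c, rfl⟩
        · have : Matrix.of (fun i j => Ak (⟨2, by omega⟩, b, c) (i, j, k))
              = (0 : Matrix (Fin 3) (Fin 3) K) := by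
            ext i j
            simp [hAk, Amat, Matrix.map_apply, hkb]
          rw [this]
          exact X₃.zero_mem
    rw [eq_top_iff]
    rintro T -
    have hT : T = ∑ p : ι, (Matrix.vecMul T Bk) p • (fun q => Ak p q) := by
      funext q
      have h1 : Matrix.vecMul (Matrix.vecMul T Bk) Ak = T := by
        rw [Matrix.vecMul_vecMul, hBAK, Matrix.vecMul_one]
      calc T q = Matrix.vecMul (Matrix.vecMul T Bk) Ak q := by rw [h1]
        _ = ∑ p : ι, Matrix.vecMul T Bk p * Ak p q := by
            simp [Matrix.vecMul, dotProduct]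
        _ = (∑ p : ι, (Matrix.vecMul T Bk) p • (fun q => Ak p q)) q := by
            simp [Finset.sum_apply, Pi.smul_apply, smul_eq_mul]
    rw [hT]
    exact Submodule.sum_mem _ (fun p _ => Submodule.smul_mem _ _ (hrow p))
end

section
/- Let K be an infinite field and d a positive integer. There exist linear subspaces X₁, X₂, X₃ ⊆ Mat_{3d,3d}, each of dimension 3d², such that X₁[1] + X₂[2] + X₃[3] = K^{3d,3d,3d}. -/
set_option linter.unusedVariables false
set_option maxRecDepth 40000
set_option exponentiation.threshold 1000

/-! ### Auxiliary construction -/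

section Aux

abbrev Idx3 : Type := Fin 3 × Fin 3 × Fin 3

/-- Bases of the three small subspaces of `Mat₃(ℤ)`. -/
def Bz : Fin 3 → Fin 3 → Matrix (Fin 3) (Fin 3) ℤ :=
  ![![!![1, 1, 0; 0, 0, 0; 0, -1, 0], !![0, 0, 0; 0, 1, 1; 0, 0, 0], !![0, 0, 1; 1, 0, 0; 0, 0, 1]], ![!![1, 0, -1; 0, 0, 1; -1, 0, 0], !![0, 0, 0; 0, 1, 0; 1, 0, 0], !![0, 0, 0; -1, 0, 0; 0, 1, 1]], ![!![1, 0, -1; 0, 0, 0; 0, 0, 0], !![0, 0, 0; 0, 1, 1; -1, 0, 0], !![0, 0, 1; 1, 0, -1; -1, -1, 1]]]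

/-- The generator tensor with column index `c = (m, t, s)` evaluated at point `p`. -/
def genZ (c p : Idx3) : ℤ :=
  if c.1 = 0 then (if p.1 = c.2.2 then Bz 0 c.2.1 p.2.1 p.2.2 else 0)
  else if c.1 = 1 then (if p.2.1 = c.2.2 then Bz 1 c.2.1 p.1 p.2.2 else 0)
  else (if p.2.2 = c.2.2 then Bz 2 c.2.1 p.1 p.2.1 else 0)

def bigP : Nat := 2576382929451448307453849429492419812366414854843659027463855734721118708514346089351121279132260696014411470262984396912654170342022030691134367014247039330507430665478943503041190621854378362383981512789126961809843033023674164600345095949708373893396762152642289092930372274490631484876625917890115604200711087306315993082131693666145733855442316440145564402745676106513435525963090766495150927017783324067437430381619605799049622613056836063374118804450585718261786530550346385938081553849137290610359473829111160323359673151011716450249463455646361164443991365927689077250828315937277896526722286688029430758516818652840319971931724406816974331958551177520756834444051654166486034735356993719389717999615521046702065461510265074367443822701611152679994792301744993786641081286501800168140004043800845834574408827479637564728444621023307551068021680004337461911875265329356085144125922960963381980605028742799219474409149122792352089213144068493485683894946085184265793503233733434673572615680637033564573506290053170285299355202580838959988992662059338060548359043347827804492962883240826870182077989858947554041393721025498575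72196684971988286299129432682765055817878737581064911396166958446101004850164777304747393204686734566112325673970439583938477867412743513729351140733476123902499069382839420970622154913

def bigN : Nat := 265563720328042886945471518760915044651604421516521109854405818787898687839137694508113567959515611478342113894725033053546342002412420405678954839842749535713399846020177889673145558375849755924177470033288172810786531243585206136259615074284327592324262872738428987060156103883805129887968530806237093368261171020603594520638127819738887970750204769448053990691005079991139270414069314635303110040927022377428937206610862856770044520555966729454353293137855483537928201541729885743495310041326425776384941503630511452893397684626269951850185324079211568822099462530191244438635845413008797876270674777709820730758114726375247351545148840925136169099187736037365038254946188709828338137930140318547818010393028126579880791239939750842646947210780843576340892685616350760736954680619569993629562049651713139887482157926510103241011736542511844815860869519516598189979884318903071878802382110488790781180363292570754913392686461373541273463620633177005870794100674770306691580302308815187721121232670417035991446164293124859615622988604379038414841064804948039556149998055630297009581955409767627129363758316539171478710386753043154287524034357032010271013281545727747087419580763880252221987514393010903847697988799067439050065371811205072922431093188235113677426589246146674950429881645211559034813329385864904706081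

def eIdx (p : Idx3) : Nat := 9 * p.1.val + 3 * p.2.1.val + p.2.2.val

def digit (B k : Nat) : ℤ := (B / 64 ^ k % 64 : Nat) - 32

def NZ : Matrix Idx3 Idx3 ℤ := Matrix.of fun p c => digit bigN (27 * eIdx p + eIdx c)

def NZinv : Matrix Idx3 Idx3 ℤ := Matrix.of fun p c => digit bigP (27 * eIdx p + eIdx c)

set_option maxHeartbeats 2000000 in
lemma genZ_eq : ∀ c p : Idx3, genZ c p = NZ p c := by decide

set_option maxHeartbeats 4000000 in
lemma NZ_mul_NZinv : NZ * NZinv = 1 := by decide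

lemma Bz_pivot : ∀ m t s : Fin 3, Bz m t s s = if t = s then 1 else 0 := by decide

variable (K : Type*) [Field K]

/-- The small basis matrices over `K`. -/
def BK (m : Fin 3) (t : Fin 3) : Matrix (Fin 3) (Fin 3) K := (Bz m t).map Int.cast

/-- The three small subspaces of `Mat₃(K)`. -/
def Xsmall (m : Fin 3) : Submodule K (Matrix (Fin 3) (Fin 3) K) :=
  Submodule.span K (Set.range (BK K m))

lemma linearIndependent_BK (m : Fin 3) : LinearIndependent K (BK K m) := by
  rw [Fintype.linearIndependent_iff]
  intro g hg i
  have h := congrFun (congrFun hg i) i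
  simp only [Finset.sum_apply, Pi.smul_apply, Matrix.zero_apply, smul_eq_mul, BK,
    Matrix.map_apply, Fin.sum_univ_three] at h
  fin_cases i <;> simp_all [Bz_pivot]

lemma finrank_Xsmall (m : Fin 3) : Module.finrank K (Xsmall K m) = 3 := by
  rw [Xsmall, finrank_span_eq_card (linearIndependent_BK K m)]
  simp

/-- Generator tensors over `K`. -/
def bT (c : Idx3) : Tensor3 K 3 3 3 := fun p => ((genZ c p : ℤ) : K)

/-- Coefficients of the decomposition of a small tensor. -/
def coef (T : Tensor3 K 3 3 3) : Idx3 → K :=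
  (NZinv.map (Int.cast : ℤ → K)).mulVec T

/-- The three components of the decomposition of a small tensor. -/
def Fm (m : Fin 3) (T : Tensor3 K 3 3 3) : Tensor3 K 3 3 3 :=
  ∑ t : Fin 3, ∑ s : Fin 3, coef K T (m, t, s) • bT K (m, t, s)

lemma sum_Fm (T : Tensor3 K 3 3 3) : Fm K 0 T + Fm K 1 T + Fm K 2 T = T := by
  have key : ∑ c : Idx3, coef K T c • bT K c = T := by
    funext p
    have h1 : ∀ c : Idx3, (coef K T c • bT K c) p
        = (NZ.map (Int.cast : ℤ → K)) p c * coef K T c := by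
      intro c
      simp [bT, genZ_eq, mul_comm, Matrix.map_apply]
    simp only [Finset.sum_apply, h1]
    have h2 : (NZ.map (Int.cast : ℤ → K) * NZinv.map (Int.cast : ℤ → K)).mulVec T p
        = T p := by
      rw [show (Int.cast : ℤ → K) = ⇑(Int.castRingHom K) from rfl, ← Matrix.map_mul,
        NZ_mul_NZinv, Matrix.map_one _ (map_zero _) (map_one _), Matrix.one_mulVec]
    rw [← h2]
    rw [← Matrix.mulVec_mulVec]
    rfl
  have expand : Fm K 0 T + Fm K 1 T + Fm K 2 T = ∑ c : Idx3, coef K T c • bT K c := by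
    simp only [Fm, Fintype.sum_prod_type, Fin.sum_univ_three]
  rw [expand, key]

lemma slice_bT_1 (t s i : Fin 3) :
    Matrix.of (fun j k => bT K (0, t, s) (i, j, k))
      = if i = s then BK K 0 t else 0 := by
  ext j k
  by_cases h : i = s <;> simp [bT, genZ, h, BK, Matrix.map_apply]

lemma slice_bT_2 (t s j : Fin 3) :
    Matrix.of (fun i k => bT K (1, t, s) (i, j, k))
      = if j = s then BK K 1 t else 0 := by
  ext i k
  by_cases h : j = s <;> simp [bT, genZ, h, BK, Matrix.map_apply]

lemma slice_bT_3 (t s k : Fin 3) :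
    Matrix.of (fun i j => bT K (2, t, s) (i, j, k))
      = if k = s then BK K 2 t else 0 := by
  ext i j
  by_cases h : k = s <;> simp [bT, genZ, h, BK, Matrix.map_apply]

lemma Fm1_mem (T : Tensor3 K 3 3 3) : Fm K 0 T ∈ sliceSub1 (Xsmall K 0) := by
  intro i
  have : Matrix.of (fun j k => Fm K 0 T (i, j, k))
      = ∑ t : Fin 3, ∑ s : Fin 3, coef K T (0, t, s)
          • Matrix.of (fun j k => bT K (0, t, s) (i, j, k)) := by
    ext j k
    simp [Fm, Finset.sum_apply, Matrix.sum_apply, Matrix.of_apply, Pi.smul_apply, smul_eq_mul]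
  rw [this]
  refine Submodule.sum_mem _ fun t _ => Submodule.sum_mem _ fun s _ =>
    Submodule.smul_mem _ _ ?_
  rw [slice_bT_1]
  split
  · exact Submodule.subset_span ⟨t, rfl⟩
  · exact Submodule.zero_mem _

lemma Fm2_mem (T : Tensor3 K 3 3 3) : Fm K 1 T ∈ sliceSub2 (Xsmall K 1) := by
  intro j
  have : Matrix.of (fun i k => Fm K 1 T (i, j, k))
      = ∑ t : Fin 3, ∑ s : Fin 3, coef K T (1, t, s)
          • Matrix.of (fun i k => bT K (1, t, s) (i, j, k)) := by
    ext i k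
    simp [Fm, Finset.sum_apply, Matrix.sum_apply, Matrix.of_apply, Pi.smul_apply, smul_eq_mul]
  rw [this]
  refine Submodule.sum_mem _ fun t _ => Submodule.sum_mem _ fun s _ =>
    Submodule.smul_mem _ _ ?_
  rw [slice_bT_2]
  split
  · exact Submodule.subset_span ⟨t, rfl⟩
  · exact Submodule.zero_mem _

lemma Fm3_mem (T : Tensor3 K 3 3 3) : Fm K 2 T ∈ sliceSub3 (Xsmall K 2) := by
  intro k
  have : Matrix.of (fun i j => Fm K 2 T (i, j, k))
      = ∑ t : Fin 3, ∑ s : Fin 3, coef K T (2, t, s)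
          • Matrix.of (fun i j => bT K (2, t, s) (i, j, k)) := by
    ext i j
    simp [Fm, Finset.sum_apply, Matrix.sum_apply, Matrix.of_apply, Pi.smul_apply, smul_eq_mul]
  rw [this]
  refine Submodule.sum_mem _ fun t _ => Submodule.sum_mem _ fun s _ =>
    Submodule.smul_mem _ _ ?_
  rw [slice_bT_3]
  split
  · exact Submodule.subset_span ⟨t, rfl⟩
  · exact Submodule.zero_mem _

/-! ### Blow-up -/

variable (d : ℕ)

/-- Position of fine index `u` in block `a`. -/
def pat (a : Fin 3) (u : Fin d) : Fin (3 * d) :=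
  ⟨a.1 + 3 * u.1, by omega⟩

/-- Block (coarse) index. -/
def bIdx (i : Fin (3 * d)) : Fin 3 := ⟨i.1 % 3, by omega⟩

/-- Fine index. -/
def fIdx (i : Fin (3 * d)) : Fin d := ⟨i.1 / 3, by omega⟩

lemma bIdx_pat (a : Fin 3) (u : Fin d) : bIdx d (pat d a u) = a := by
  have ha := a.isLt
  apply Fin.ext
  simp only [bIdx, pat]
  omega

lemma fIdx_pat (a : Fin 3) (u : Fin d) : fIdx d (pat d a u) = u := by
  have ha := a.isLt
  apply Fin.ext
  simp only [fIdx, pat]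
  omega

lemma pat_bIdx_fIdx (i : Fin (3 * d)) : pat d (bIdx d i) (fIdx d i) = i := by
  apply Fin.ext
  simp only [pat, bIdx, fIdx]
  omega

/-- The blow-up of a subspace of `Mat₃` to a subspace of `Mat_{3d}`. -/
def blow (X : Submodule K (Matrix (Fin 3) (Fin 3) K)) :
    Submodule K (Matrix (Fin (3 * d)) (Fin (3 * d)) K) where
  carrier := {M | ∀ u v : Fin d, Matrix.of (fun a b => M (pat d a u) (pat d b v)) ∈ X}
  add_mem' := by
    intro M N hM hN u v
    have : Matrix.of (fun a b => (M + N) (pat d a u) (pat d b v))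
        = Matrix.of (fun a b => M (pat d a u) (pat d b v))
          + Matrix.of (fun a b => N (pat d a u) (pat d b v)) := by
      ext a b; simp
    rw [this]; exact X.add_mem (hM u v) (hN u v)
  zero_mem' := by
    intro u v
    have : Matrix.of (fun a b => (0 : Matrix (Fin (3 * d)) (Fin (3 * d)) K)
        (pat d a u) (pat d b v)) = 0 := by ext a b; simp
    rw [this]; exact X.zero_mem
  smul_mem' := by
    intro c M hM u v
    have : Matrix.of (fun a b => (c • M) (pat d a u) (pat d b v))
        = c • Matrix.of (fun a b => M (pat d a u) (pat d b v)) := by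
      ext a b; simp
    rw [this]; exact X.smul_mem c (hM u v)

/-- The blow-up is linearly equivalent to `d² ` copies of `X`. -/
def blowEquiv (X : Submodule K (Matrix (Fin 3) (Fin 3) K)) :
    blow K d X ≃ₗ[K] (Fin d × Fin d → X) where
  toFun M := fun uv => ⟨Matrix.of (fun a b => M.1 (pat d a uv.1) (pat d b uv.2)),
    M.2 uv.1 uv.2⟩
  map_add' M N := by
    funext uv
    apply Subtype.ext
    apply Matrix.ext
    intro a b
    simp only [Matrix.of_apply, Submodule.coe_add, Matrix.add_apply, Pi.add_apply]
  map_smul' c M := by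
    funext uv
    apply Subtype.ext
    apply Matrix.ext
    intro a b
    simp only [Matrix.of_apply, SetLike.val_smul, Matrix.smul_apply, Pi.smul_apply,
      RingHom.id_apply]
  invFun f := ⟨Matrix.of (fun i j => (f (fIdx d i, fIdx d j)).1 (bIdx d i) (bIdx d j)),
    by
      intro u v
      have : Matrix.of (fun a b =>
          Matrix.of (fun i j => (f (fIdx d i, fIdx d j)).1 (bIdx d i) (bIdx d j))
            (pat d a u) (pat d b v)) = (f (u, v)).1 := by
        ext a b
        simp [bIdx_pat, fIdx_pat]
      rw [this]; exact (f (u, v)).2⟩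
  left_inv M := by
    apply Subtype.ext
    apply Matrix.ext
    intro i j
    simp [bIdx_pat, fIdx_pat, pat_bIdx_fIdx]
  right_inv f := by
    funext uv
    apply Subtype.ext
    apply Matrix.ext
    intro a b
    simp [bIdx_pat, fIdx_pat]

lemma finrank_blow (X : Submodule K (Matrix (Fin 3) (Fin 3) K)) :
    Module.finrank K (blow K d X) = d ^ 2 * Module.finrank K X := by
  rw [(blowEquiv K d X).finrank_eq, Module.finrank_pi_fintype, Finset.sum_const]
  simp [sq, mul_assoc]

end Aux

/-- For every positive integer `d` there exist subspaces
`X₁, X₂, X₃ ⊆ Mat_{3d,3d}`, each of dimension `3d²`, with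
`X₁[1] + X₂[2] + X₃[3] = K^{3d,3d,3d}`. -/
theorem tensor_space_decomposition_blowup (K : Type*) [Field K] [Infinite K]
    (d : ℕ) (hd : 0 < d) :
    ∃ (X₁ X₂ X₃ : Submodule K (Matrix (Fin (3 * d)) (Fin (3 * d)) K)),
      Module.finrank K X₁ = 3 * d ^ 2 ∧ Module.finrank K X₂ = 3 * d ^ 2 ∧
      Module.finrank K X₃ = 3 * d ^ 2 ∧
      sliceSub1 (n₁ := 3 * d) X₁ ⊔ sliceSub2 (n₂ := 3 * d) X₂ ⊔
        sliceSub3 (n₃ := 3 * d) X₃ = ⊤ := by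
  refine ⟨blow K d (Xsmall K 0), blow K d (Xsmall K 1), blow K d (Xsmall K 2),
    ?_, ?_, ?_, ?_⟩
  · rw [finrank_blow, finrank_Xsmall]; ring
  · rw [finrank_blow, finrank_Xsmall]; ring
  · rw [finrank_blow, finrank_Xsmall]; ring
  · rw [eq_top_iff]
    rintro T -
    -- restriction of `T` to the fine block `(u, v, w)`
    set R : Fin d × Fin d × Fin d → Tensor3 K 3 3 3 :=
      fun uvw p => T (pat d p.1 uvw.1, pat d p.2.1 uvw.2.1, pat d p.2.2 uvw.2.2) with hR
    set A : Tensor3 K (3 * d) (3 * d) (3 * d) :=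
      fun p => Fm K 0 (R (fIdx d p.1, fIdx d p.2.1, fIdx d p.2.2))
        (bIdx d p.1, bIdx d p.2.1, bIdx d p.2.2) with hA
    set B : Tensor3 K (3 * d) (3 * d) (3 * d) :=
      fun p => Fm K 1 (R (fIdx d p.1, fIdx d p.2.1, fIdx d p.2.2))
        (bIdx d p.1, bIdx d p.2.1, bIdx d p.2.2) with hB
    set C : Tensor3 K (3 * d) (3 * d) (3 * d) :=
      fun p => Fm K 2 (R (fIdx d p.1, fIdx d p.2.1, fIdx d p.2.2))
        (bIdx d p.1, bIdx d p.2.1, bIdx d p.2.2) with hC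
    have hT : T = A + B + C := by
      funext p
      have h := congrFun (sum_Fm K (R (fIdx d p.1, fIdx d p.2.1, fIdx d p.2.2)))
        (bIdx d p.1, bIdx d p.2.1, bIdx d p.2.2)
      have h2 : R (fIdx d p.1, fIdx d p.2.1, fIdx d p.2.2)
          (bIdx d p.1, bIdx d p.2.1, bIdx d p.2.2) = T p := by
        simp only [hR, pat_bIdx_fIdx]
      rw [h2] at h
      calc T p = _ := h.symm
        _ = (A + B + C) p := rfl
    have hAmem : A ∈ sliceSub1 (n₁ := 3 * d) (blow K d (Xsmall K 0)) := by
      intro i u v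
      have key : Matrix.of (fun a b =>
          Matrix.of (fun j k => A (i, j, k)) (pat d a u) (pat d b v))
          = Matrix.of (fun a b => Fm K 0 (R (fIdx d i, u, v)) (bIdx d i, a, b)) := by
        ext a b
        simp only [hA, Matrix.of_apply, bIdx_pat, fIdx_pat]
      rw [key]
      exact Fm1_mem K (R (fIdx d i, u, v)) (bIdx d i)
    have hBmem : B ∈ sliceSub2 (n₂ := 3 * d) (blow K d (Xsmall K 1)) := by
      intro j u v
      have key : Matrix.of (fun a b =>
          Matrix.of (fun i k => B (i, j, k)) (pat d a u) (pat d b v))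
          = Matrix.of (fun a b => Fm K 1 (R (u, fIdx d j, v)) (a, bIdx d j, b)) := by
        ext a b
        simp only [hB, Matrix.of_apply, bIdx_pat, fIdx_pat]
      rw [key]
      exact Fm2_mem K (R (u, fIdx d j, v)) (bIdx d j)
    have hCmem : C ∈ sliceSub3 (n₃ := 3 * d) (blow K d (Xsmall K 2)) := by
      intro k u v
      have key : Matrix.of (fun a b =>
          Matrix.of (fun i j => C (i, j, k)) (pat d a u) (pat d b v))
          = Matrix.of (fun a b => Fm K 2 (R (u, v, fIdx d k)) (a, b, bIdx d k)) := by
        ext a b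
        simp only [hC, Matrix.of_apply, bIdx_pat, fIdx_pat]
      rw [key]
      exact Fm3_mem K (R (u, v, fIdx d k)) (bIdx d k)
    rw [hT]
    exact Submodule.add_mem _
      (Submodule.add_mem _
        (Submodule.mem_sup_left (Submodule.mem_sup_left hAmem))
        (Submodule.mem_sup_left (Submodule.mem_sup_right hBmem)))
      (Submodule.mem_sup_right hCmem)
end

section
/- Let K be a field, n a positive integer, and r ≤ n. For a tensor T ∈ K^{n,n,n}, we have Q(T) ≥ r if and only if there exist invertible n×n matrices g₁, g₂, g₃ over K and a tensor S ∈ X_r such that T_{ijk} = Σ_{a,b,c} (g₁)_{ia} (g₂)_{jb} (g₃)_{kc} S_{abc} for all i,j,k. (The set of tensors of subrank at least r is the image of the map ψ_r : GL_n × GL_n × GL_n × X_r → K^{n,n,n}, (g₁,g₂,g₃,S) ↦ (g₁⊗g₂⊗g₃)S.) -/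
/-- `S` is a restriction of `T`. -/
def Restrict3 {K : Type*} [CommRing K] {m₁ m₂ m₃ n₁ n₂ n₃ : ℕ}
    (S : Tensor3 K m₁ m₂ m₃) (T : Tensor3 K n₁ n₂ n₃) : Prop :=
  ∃ (A : Matrix (Fin m₁) (Fin n₁) K) (B : Matrix (Fin m₂) (Fin n₂) K)
    (C : Matrix (Fin m₃) (Fin n₃) K),
    ∀ i j k, S (i, j, k) = ∑ a, ∑ b, ∑ c, A i a * B j b * C k c * T (a, b, c)

/-- The unit tensor `I_r`. -/
def unitTensor3 (K : Type*) [CommRing K] (r : ℕ) : Tensor3 K r r r :=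
  fun p => if p.1 = p.2.1 ∧ p.2.1 = p.2.2 then 1 else 0

/-- The subrank `Q(T)`: the largest `r` such that `I_r ≤ T`. -/
noncomputable def subrank3 {K : Type*} [CommRing K] {n₁ n₂ n₃ : ℕ}
    (T : Tensor3 K n₁ n₂ n₃) : ℕ :=
  sSup {r : ℕ | Restrict3 (unitTensor3 K r) T}

/-- Membership in `X_r`: the `[r]×[r]×[r]` subtensor vanishes off the diagonal and has
nonzero diagonal entries. -/
def MemXr {K : Type*} [CommRing K] {n : ℕ} (r : ℕ) (T : Tensor3 K n n n) : Prop :=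
  (∀ i j k : Fin n, (i : ℕ) < r → (j : ℕ) < r → (k : ℕ) < r →
    ¬(i = j ∧ j = k) → T (i, j, k) = 0) ∧
  (∀ i : Fin n, (i : ℕ) < r → T (i, i, i) ≠ 0)

namespace Sub3Aux

open Matrix Finset

variable {K : Type*} [Field K]

def act1 {m n₂ n₃ n : ℕ} (A : Matrix (Fin m) (Fin n) K) (T : Tensor3 K n n₂ n₃) :
    Tensor3 K m n₂ n₃ := fun p => ∑ a, A p.1 a * T (a, p.2.1, p.2.2)

def act2 {m n₁ n₃ n : ℕ} (B : Matrix (Fin m) (Fin n) K) (T : Tensor3 K n₁ n n₃) :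
    Tensor3 K n₁ m n₃ := fun p => ∑ b, B p.2.1 b * T (p.1, b, p.2.2)

def act3 {m n₁ n₂ n : ℕ} (C : Matrix (Fin m) (Fin n) K) (T : Tensor3 K n₁ n₂ n) :
    Tensor3 K n₁ n₂ m := fun p => ∑ c, C p.2.2 c * T (p.1, p.2.1, c)

def act {m₁ m₂ m₃ n₁ n₂ n₃ : ℕ} (A : Matrix (Fin m₁) (Fin n₁) K)
    (B : Matrix (Fin m₂) (Fin n₂) K) (C : Matrix (Fin m₃) (Fin n₃) K)
    (T : Tensor3 K n₁ n₂ n₃) : Tensor3 K m₁ m₂ m₃ :=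
  fun p => ∑ a, ∑ b, ∑ c, A p.1 a * B p.2.1 b * C p.2.2 c * T (a, b, c)

lemma act_eq {m₁ m₂ m₃ n₁ n₂ n₃ : ℕ} (A : Matrix (Fin m₁) (Fin n₁) K)
    (B : Matrix (Fin m₂) (Fin n₂) K) (C : Matrix (Fin m₃) (Fin n₃) K)
    (T : Tensor3 K n₁ n₂ n₃) : act A B C T = act1 A (act2 B (act3 C T)) := by
  funext ⟨i, j, k⟩
  simp only [act, act1, act2, act3, Finset.mul_sum]
  exact Finset.sum_congr rfl fun a _ => Finset.sum_congr rfl fun b _ =>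
    Finset.sum_congr rfl fun c _ => by ring

lemma act1_act1 {m l n₂ n₃ n : ℕ} (A : Matrix (Fin m) (Fin l) K)
    (A' : Matrix (Fin l) (Fin n) K) (T : Tensor3 K n n₂ n₃) :
    act1 A (act1 A' T) = act1 (A * A') T := by
  funext ⟨i, j, k⟩
  simp only [act1, Matrix.mul_apply, Finset.mul_sum, Finset.sum_mul]
  rw [Finset.sum_comm]
  exact Finset.sum_congr rfl fun a _ => Finset.sum_congr rfl fun b _ => by ring

lemma act2_act2 {m l n₁ n₃ n : ℕ} (A : Matrix (Fin m) (Fin l) K)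
    (A' : Matrix (Fin l) (Fin n) K) (T : Tensor3 K n₁ n n₃) :
    act2 A (act2 A' T) = act2 (A * A') T := by
  funext ⟨i, j, k⟩
  simp only [act2, Matrix.mul_apply, Finset.mul_sum, Finset.sum_mul]
  rw [Finset.sum_comm]
  exact Finset.sum_congr rfl fun a _ => Finset.sum_congr rfl fun b _ => by ring

lemma act3_act3 {m l n₁ n₂ n : ℕ} (A : Matrix (Fin m) (Fin l) K)
    (A' : Matrix (Fin l) (Fin n) K) (T : Tensor3 K n₁ n₂ n) :
    act3 A (act3 A' T) = act3 (A * A') T := by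
  funext ⟨i, j, k⟩
  simp only [act3, Matrix.mul_apply, Finset.mul_sum, Finset.sum_mul]
  rw [Finset.sum_comm]
  exact Finset.sum_congr rfl fun a _ => Finset.sum_congr rfl fun b _ => by ring

lemma act2_act1 {m₁ m₂ n₁ n₂ n₃ : ℕ} (B : Matrix (Fin m₂) (Fin n₂) K)
    (A : Matrix (Fin m₁) (Fin n₁) K) (T : Tensor3 K n₁ n₂ n₃) :
    act2 B (act1 A T) = act1 A (act2 B T) := by
  funext ⟨i, j, k⟩
  simp only [act1, act2, Finset.mul_sum]
  rw [Finset.sum_comm]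
  exact Finset.sum_congr rfl fun a _ => Finset.sum_congr rfl fun b _ => by ring

lemma act3_act1 {m₁ m₃ n₁ n₂ n₃ : ℕ} (C : Matrix (Fin m₃) (Fin n₃) K)
    (A : Matrix (Fin m₁) (Fin n₁) K) (T : Tensor3 K n₁ n₂ n₃) :
    act3 C (act1 A T) = act1 A (act3 C T) := by
  funext ⟨i, j, k⟩
  simp only [act1, act3, Finset.mul_sum]
  rw [Finset.sum_comm]
  exact Finset.sum_congr rfl fun a _ => Finset.sum_congr rfl fun b _ => by ring

lemma act3_act2 {m₂ m₃ n₁ n₂ n₃ : ℕ} (C : Matrix (Fin m₃) (Fin n₃) K)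
    (B : Matrix (Fin m₂) (Fin n₂) K) (T : Tensor3 K n₁ n₂ n₃) :
    act3 C (act2 B T) = act2 B (act3 C T) := by
  funext ⟨i, j, k⟩
  simp only [act2, act3, Finset.mul_sum]
  rw [Finset.sum_comm]
  exact Finset.sum_congr rfl fun a _ => Finset.sum_congr rfl fun b _ => by ring

lemma act_act {m₁ m₂ m₃ l₁ l₂ l₃ n₁ n₂ n₃ : ℕ}
    (A : Matrix (Fin m₁) (Fin l₁) K) (B : Matrix (Fin m₂) (Fin l₂) K)
    (C : Matrix (Fin m₃) (Fin l₃) K)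
    (A' : Matrix (Fin l₁) (Fin n₁) K) (B' : Matrix (Fin l₂) (Fin n₂) K)
    (C' : Matrix (Fin l₃) (Fin n₃) K) (T : Tensor3 K n₁ n₂ n₃) :
    act A B C (act A' B' C' T) = act (A * A') (B * B') (C * C') T := by
  rw [act_eq A B C, act_eq A' B' C', act_eq (A * A'),
    act3_act1, act3_act2, act3_act3, act2_act1, act2_act2, act1_act1]

lemma act_one {n₁ n₂ n₃ : ℕ} (T : Tensor3 K n₁ n₂ n₃) :
    act (1 : Matrix (Fin n₁) (Fin n₁) K) 1 1 T = T := by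
  funext ⟨i, j, k⟩
  simp [act, Matrix.one_apply, ite_mul, one_mul, zero_mul, Finset.sum_ite_eq]

lemma restrict3_iff {m₁ m₂ m₃ n₁ n₂ n₃ : ℕ} {S : Tensor3 K m₁ m₂ m₃}
    {T : Tensor3 K n₁ n₂ n₃} :
    Restrict3 S T ↔ ∃ (A : Matrix (Fin m₁) (Fin n₁) K) (B : Matrix (Fin m₂) (Fin n₂) K)
      (C : Matrix (Fin m₃) (Fin n₃) K), S = act A B C T := by
  constructor
  · rintro ⟨A, B, C, h⟩
    exact ⟨A, B, C, funext fun p => by obtain ⟨i, j, k⟩ := p; exact h i j k⟩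
  · rintro ⟨A, B, C, h⟩
    exact ⟨A, B, C, fun i j k => congrFun h (i, j, k)⟩

lemma restrict3_trans {m₁ m₂ m₃ l₁ l₂ l₃ n₁ n₂ n₃ : ℕ} {S : Tensor3 K m₁ m₂ m₃}
    {T : Tensor3 K l₁ l₂ l₃} {U : Tensor3 K n₁ n₂ n₃}
    (h1 : Restrict3 S T) (h2 : Restrict3 T U) : Restrict3 S U := by
  rw [restrict3_iff] at h1 h2 ⊢
  obtain ⟨A, B, C, h1⟩ := h1
  obtain ⟨A', B', C', h2⟩ := h2
  exact ⟨A * A', B * B', C * C', by rw [h1, h2, act_act]⟩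

/-- Delta-type collapsing of a sum. -/
lemma sum_delta_mul {n : ℕ} (v : Fin n) (w : Fin n → K) (X : Fin n → K) :
    ∑ a, (if a = v then w a else 0) * X a = w v * X v := by
  simp [ite_mul]

lemma act1_delta {r n n₂ n₃ : ℕ} (hr : r ≤ n) (M : Matrix (Fin r) (Fin n) K)
    (w : Fin n → K) (hM : ∀ i a, M i a = if a = Fin.castLE hr i then w a else 0)
    (T : Tensor3 K n n₂ n₃) (i : Fin r) (j : Fin n₂) (k : Fin n₃) :
    act1 M T (i, j, k) = w (Fin.castLE hr i) * T (Fin.castLE hr i, j, k) := by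
  show (∑ a, M i a * T (a, j, k)) = _
  rw [show (∑ a, M i a * T (a, j, k))
      = ∑ a, (if a = Fin.castLE hr i then w a else 0) * T (a, j, k) from
    Finset.sum_congr rfl fun a _ => by rw [hM]]
  exact sum_delta_mul _ w _

lemma act2_delta {r n n₁ n₃ : ℕ} (hr : r ≤ n) (M : Matrix (Fin r) (Fin n) K)
    (w : Fin n → K) (hM : ∀ i a, M i a = if a = Fin.castLE hr i then w a else 0)
    (T : Tensor3 K n₁ n n₃) (i : Fin n₁) (j : Fin r) (k : Fin n₃) :
    act2 M T (i, j, k) = w (Fin.castLE hr j) * T (i, Fin.castLE hr j, k) := by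
  show (∑ b, M j b * T (i, b, k)) = _
  rw [show (∑ b, M j b * T (i, b, k))
      = ∑ b, (if b = Fin.castLE hr j then w b else 0) * T (i, b, k) from
    Finset.sum_congr rfl fun b _ => by rw [hM]]
  exact sum_delta_mul _ w _

lemma act3_delta {r n n₁ n₂ : ℕ} (hr : r ≤ n) (M : Matrix (Fin r) (Fin n) K)
    (w : Fin n → K) (hM : ∀ i a, M i a = if a = Fin.castLE hr i then w a else 0)
    (T : Tensor3 K n₁ n₂ n) (i : Fin n₁) (j : Fin n₂) (k : Fin r) :
    act3 M T (i, j, k) = w (Fin.castLE hr k) * T (i, j, Fin.castLE hr k) := by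
  show (∑ c, M k c * T (i, j, c)) = _
  rw [show (∑ c, M k c * T (i, j, c))
      = ∑ c, (if c = Fin.castLE hr k then w c else 0) * T (i, j, c) from
    Finset.sum_congr rfl fun c _ => by rw [hM]]
  exact sum_delta_mul _ w _

/-- Generic criterion: a "delta relation" implies linear independence of the rows of `A`. -/
lemma li_aux {m n : ℕ} (A : Matrix (Fin m) (Fin n) K) (f : Fin m → Fin n → K)
    (h : ∀ i j : Fin m, (∑ a, A i a * f j a) = if i = j then 1 else 0) :
    LinearIndependent K (fun i => A i) := by
  rw [Fintype.linearIndependent_iff]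
  intro g hg j
  have h0 : ∀ a, ∑ i, g i * A i a = 0 := by
    intro a
    have := congrFun hg a
    simpa using this
  calc g j = ∑ i, g i * ∑ a, A i a * f j a := by
        simp only [h, mul_ite, mul_one, mul_zero]
        rw [Finset.sum_ite_eq' univ j g]
        simp
    _ = ∑ a, (∑ i, g i * A i a) * f j a := by
        simp only [Finset.mul_sum]
        rw [Finset.sum_comm]
        simp only [Finset.sum_mul]
        exact Finset.sum_congr rfl fun a _ => Finset.sum_congr rfl fun i _ => by ring
    _ = 0 := by simp [h0]

lemma rows_li_1 {m n₁ n₂ n₃ : ℕ} {A : Matrix (Fin m) (Fin n₁) K}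
    {B : Matrix (Fin m) (Fin n₂) K} {C : Matrix (Fin m) (Fin n₃) K} {T : Tensor3 K n₁ n₂ n₃}
    (h : ∀ i j k, unitTensor3 K m (i, j, k) = ∑ a, ∑ b, ∑ c,
      A i a * B j b * C k c * T (a, b, c)) :
    LinearIndependent K (fun i => A i) := by
  apply li_aux A (fun j a => ∑ b, ∑ c, B j b * C j c * T (a, b, c))
  intro i j
  have e1 : unitTensor3 K m (i, j, j) = if i = j then 1 else 0 := by
    simp [unitTensor3]
  rw [← e1, h i j j]
  simp only [Finset.mul_sum]
  exact Finset.sum_congr rfl fun a _ => Finset.sum_congr rfl fun b _ =>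
    Finset.sum_congr rfl fun c _ => by ring

lemma rows_li_2 {m n₁ n₂ n₃ : ℕ} {A : Matrix (Fin m) (Fin n₁) K}
    {B : Matrix (Fin m) (Fin n₂) K} {C : Matrix (Fin m) (Fin n₃) K} {T : Tensor3 K n₁ n₂ n₃}
    (h : ∀ i j k, unitTensor3 K m (i, j, k) = ∑ a, ∑ b, ∑ c,
      A i a * B j b * C k c * T (a, b, c)) :
    LinearIndependent K (fun i => B i) := by
  apply li_aux B (fun j b => ∑ a, ∑ c, A j a * C j c * T (a, b, c))
  intro i j
  have e1 : unitTensor3 K m (j, i, j) = if i = j then 1 else 0 := by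
    rcases eq_or_ne i j with hij | hij
    · simp [unitTensor3, hij]
    · simp [unitTensor3, hij, Ne.symm hij]
  rw [← e1, h j i j]
  conv_lhs => simp only [Finset.mul_sum]
  conv_lhs => rw [Finset.sum_comm]
  exact Finset.sum_congr rfl fun a _ => Finset.sum_congr rfl fun b _ =>
    Finset.sum_congr rfl fun c _ => by ring

lemma rows_li_3 {m n₁ n₂ n₃ : ℕ} {A : Matrix (Fin m) (Fin n₁) K}
    {B : Matrix (Fin m) (Fin n₂) K} {C : Matrix (Fin m) (Fin n₃) K} {T : Tensor3 K n₁ n₂ n₃}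
    (h : ∀ i j k, unitTensor3 K m (i, j, k) = ∑ a, ∑ b, ∑ c,
      A i a * B j b * C k c * T (a, b, c)) :
    LinearIndependent K (fun i => C i) := by
  apply li_aux C (fun j c => ∑ a, ∑ b, A j a * B j b * T (a, b, c))
  intro i j
  have e1 : unitTensor3 K m (j, j, i) = if i = j then 1 else 0 := by
    rcases eq_or_ne i j with hij | hij
    · simp [unitTensor3, hij]
    · simp [unitTensor3, hij, Ne.symm hij]
  rw [← e1, h j j i]
  conv_lhs => simp only [Finset.mul_sum]
  conv_lhs => rw [Finset.sum_comm]
  refine Finset.sum_congr rfl fun a _ => ?_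
  conv_lhs => rw [Finset.sum_comm]
  exact Finset.sum_congr rfl fun b _ => Finset.sum_congr rfl fun c _ => by ring

/-- A restriction `I_m ≤ T` forces `m ≤ n₁`. -/
lemma card_le_of_unit_restrict {m n₁ n₂ n₃ : ℕ} {T : Tensor3 K n₁ n₂ n₃}
    (h : Restrict3 (unitTensor3 K m) T) : m ≤ n₁ := by
  obtain ⟨A, B, C, hABC⟩ := h
  have hli : LinearIndependent K (fun i => A i) := rows_li_1 hABC
  have := hli.fintype_card_le_finrank
  simpa [Module.finrank_fin_fun] using this

/-- `I_r` restricts to `I_m` when `r ≤ m`. -/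
lemma unit_restrict_unit {r m : ℕ} (h : r ≤ m) :
    Restrict3 (unitTensor3 K r) (unitTensor3 K m) := by
  set E : Matrix (Fin r) (Fin m) K :=
    Matrix.of fun i a => if a = Fin.castLE h i then 1 else 0 with hE
  refine ⟨E, E, E, fun i j k => ?_⟩
  have key : act E E E (unitTensor3 K m) (i, j, k) = unitTensor3 K r (i, j, k) := by
    rw [act_eq, act1_delta h E (fun _ => 1) (fun _ _ => rfl),
      act2_delta h E (fun _ => 1) (fun _ _ => rfl),
      act3_delta h E (fun _ => 1) (fun _ _ => rfl)]
    simp [unitTensor3, Fin.castLE_inj]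
  exact key.symm

/-- A tensor in `X_r` admits `I_r` as a restriction. -/
lemma unit_restrict_of_memXr {n r : ℕ} (hr : r ≤ n) (S : Tensor3 K n n n)
    (hS : MemXr r S) : Restrict3 (unitTensor3 K r) S := by
  set E : Matrix (Fin r) (Fin n) K :=
    Matrix.of fun i a => if a = Fin.castLE hr i then 1 else 0 with hE
  set D : Matrix (Fin r) (Fin n) K :=
    Matrix.of fun k c => if c = Fin.castLE hr k then (S (c, c, c))⁻¹ else 0 with hD
  refine ⟨E, E, D, fun i j k => ?_⟩
  have key : act E E D S (i, j, k) = unitTensor3 K r (i, j, k) := by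
    rw [act_eq, act1_delta hr E (fun _ => 1) (fun _ _ => rfl),
      act2_delta hr E (fun _ => 1) (fun _ _ => rfl),
      act3_delta hr D (fun c => (S (c, c, c))⁻¹) (fun _ _ => rfl), one_mul, one_mul]
    by_cases hd : i = j ∧ j = k
    · obtain ⟨h1, h2⟩ := hd
      subst h1; subst h2
      rw [inv_mul_cancel₀ (hS.2 (Fin.castLE hr i) (by simpa using i.isLt))]
      simp [unitTensor3]
    · have hz : S (Fin.castLE hr i, Fin.castLE hr j, Fin.castLE hr k) = 0 :=
        hS.1 (Fin.castLE hr i) (Fin.castLE hr j) (Fin.castLE hr k)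
          (by simp) (by simp) (by simp)
          (fun hc => hd ⟨Fin.castLE_injective hr hc.1, Fin.castLE_injective hr hc.2⟩)
      rw [hz, mul_zero]
      simp [unitTensor3, hd]
  exact key.symm

/-- Extension of linearly independent rows to an invertible matrix. -/
lemma exists_extend_aux : ∀ (k r n : ℕ) (h : r + k = n) (A : Matrix (Fin r) (Fin n) K),
    LinearIndependent K (fun i => A i) →
    ∃ M : Matrix (Fin n) (Fin n) K, IsUnit M ∧
      ∀ i : Fin r, M (Fin.castLE (h ▸ Nat.le_add_right r k) i) = A i := by
  intro k
  induction k with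
  | zero =>
    intro r n h A hA
    have e : r = n := by omega
    subst e
    refine ⟨A, ?_, fun i => congrArg A (Fin.ext rfl)⟩
    rw [← Matrix.linearIndependent_rows_iff_isUnit]
    exact hA
  | succ k ih =>
    intro r n h A hA
    have hfr : r < Module.finrank K (Fin n → K) := by
      rw [Module.finrank_fin_fun]; omega
    obtain ⟨x, hx⟩ := exists_linearIndependent_snoc_of_lt_finrank hA hfr
    obtain ⟨M, hM, hMr⟩ := ih (r + 1) n (by omega) (Matrix.of (Fin.snoc (fun i => A i) x)) hx
    refine ⟨M, hM, fun i => ?_⟩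
    have h1 : Fin.castLE (h ▸ Nat.le_add_right r (k+1)) i
        = Fin.castLE ((by omega : (r+1) + k = n) ▸ Nat.le_add_right (r+1) k) (Fin.castSucc i) :=
      Fin.ext rfl
    rw [h1, hMr (Fin.castSucc i)]
    exact Fin.snoc_castSucc (α := fun _ => Fin n → K) x (fun i => A i) i

lemma exists_extend {r n : ℕ} (hr : r ≤ n) (A : Matrix (Fin r) (Fin n) K)
    (hA : LinearIndependent K (fun i => A i)) :
    ∃ M : Matrix (Fin n) (Fin n) K, IsUnit M ∧ ∀ i : Fin r, M (Fin.castLE hr i) = A i := by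
  obtain ⟨M, hM, hMr⟩ := exists_extend_aux (n - r) r n (by omega) A hA
  exact ⟨M, hM, fun i => by rw [← hMr i]⟩

end Sub3Aux

open Sub3Aux in
/-- A tensor `T` in `K^{n,n,n}` has subrank at least `r` if and only if it is obtained
from some `S` in `X_r` by applying invertible matrices `g₁, g₂, g₃` to the three legs:
the set of tensors of subrank at least `r` is the image of
`ψ_r : GL_n × GL_n × GL_n × X_r → K^{n,n,n}`. -/
theorem subrank_ge_iff_orbit_Xr (K : Type*) [Field K] (n r : ℕ) (hn : 0 < n) (hr : r ≤ n)
    (T : Tensor3 K n n n) :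
    r ≤ subrank3 T ↔
      ∃ (g₁ g₂ g₃ : Matrix (Fin n) (Fin n) K) (S : Tensor3 K n n n),
        IsUnit g₁ ∧ IsUnit g₂ ∧ IsUnit g₃ ∧ MemXr r S ∧
        ∀ i j k, T (i, j, k) = ∑ a, ∑ b, ∑ c, g₁ i a * g₂ j b * g₃ k c * S (a, b, c) := by
  have hbdd : BddAbove {m : ℕ | Restrict3 (unitTensor3 K m) T} :=
    ⟨n, fun m hm => card_le_of_unit_restrict hm⟩
  have h0 : (0 : ℕ) ∈ {m : ℕ | Restrict3 (unitTensor3 K m) T} :=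
    ⟨0, 0, 0, fun i => i.elim0⟩
  constructor
  · intro h
    have hmem : sSup {m : ℕ | Restrict3 (unitTensor3 K m) T}
        ∈ {m : ℕ | Restrict3 (unitTensor3 K m) T} := Nat.sSup_mem ⟨0, h0⟩ hbdd
    have hrT : Restrict3 (unitTensor3 K r) T :=
      restrict3_trans (unit_restrict_unit h) hmem
    obtain ⟨A, B, C, hABC⟩ := hrT
    obtain ⟨A₁, hA₁, hA₁r⟩ := exists_extend hr A (rows_li_1 hABC)
    obtain ⟨B₁, hB₁, hB₁r⟩ := exists_extend hr B (rows_li_2 hABC)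
    obtain ⟨C₁, hC₁, hC₁r⟩ := exists_extend hr C (rows_li_3 hABC)
    set S : Tensor3 K n n n := act A₁ B₁ C₁ T with hSdef
    have hrow : ∀ (i j k : Fin n) (hi : (i:ℕ) < r) (hj : (j:ℕ) < r) (hk : (k:ℕ) < r),
        S (i, j, k) = unitTensor3 K r (⟨i, hi⟩, ⟨j, hj⟩, ⟨k, hk⟩) := by
      intro i j k hi hj hk
      have eA : A₁ i = A ⟨i, hi⟩ := by
        rw [← hA₁r ⟨i, hi⟩]; exact congrArg A₁ (Fin.ext rfl)
      have eB : B₁ j = B ⟨j, hj⟩ := by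
        rw [← hB₁r ⟨j, hj⟩]; exact congrArg B₁ (Fin.ext rfl)
      have eC : C₁ k = C ⟨k, hk⟩ := by
        rw [← hC₁r ⟨k, hk⟩]; exact congrArg C₁ (Fin.ext rfl)
      show (∑ a, ∑ b, ∑ c, A₁ i a * B₁ j b * C₁ k c * T (a, b, c)) = _
      rw [eA, eB, eC]
      exact (hABC ⟨i, hi⟩ ⟨j, hj⟩ ⟨k, hk⟩).symm
    have hdetA : IsUnit A₁.det := (Matrix.isUnit_iff_isUnit_det A₁).1 hA₁
    have hdetB : IsUnit B₁.det := (Matrix.isUnit_iff_isUnit_det B₁).1 hB₁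
    have hdetC : IsUnit C₁.det := (Matrix.isUnit_iff_isUnit_det C₁).1 hC₁
    refine ⟨A₁⁻¹, B₁⁻¹, C₁⁻¹, S, ?_, ?_, ?_, ?_, ?_⟩
    · exact Matrix.isUnit_nonsing_inv_iff.2 hA₁
    · exact Matrix.isUnit_nonsing_inv_iff.2 hB₁
    · exact Matrix.isUnit_nonsing_inv_iff.2 hC₁
    · constructor
      · intro i j k hi hj hk hne
        rw [hrow i j k hi hj hk]
        have hiff : ((⟨(i:ℕ), hi⟩ : Fin r) = ⟨(j:ℕ), hj⟩ ∧
            (⟨(j:ℕ), hj⟩ : Fin r) = ⟨(k:ℕ), hk⟩) ↔ (i = j ∧ j = k) := by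
          simp [Fin.ext_iff]
        simp only [unitTensor3]
        rw [if_neg (fun hc => hne (hiff.1 hc))]
      · intro i hi
        rw [hrow i i i hi hi hi]
        simp [unitTensor3]
    · have key : act A₁⁻¹ B₁⁻¹ C₁⁻¹ S = T := by
        rw [hSdef, act_act, Matrix.nonsing_inv_mul A₁ hdetA, Matrix.nonsing_inv_mul B₁ hdetB,
          Matrix.nonsing_inv_mul C₁ hdetC, act_one]
      intro i j k
      exact (congrFun key (i, j, k)).symm
  · rintro ⟨g₁, g₂, g₃, S, hu1, hu2, hu3, hS, hT⟩
    have hTS : T = act g₁ g₂ g₃ S := by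
      funext p; obtain ⟨i, j, k⟩ := p; exact hT i j k
    have hST : Restrict3 S T := by
      rw [restrict3_iff]
      refine ⟨g₁⁻¹, g₂⁻¹, g₃⁻¹, ?_⟩
      rw [hTS, act_act, Matrix.nonsing_inv_mul g₁ ((Matrix.isUnit_iff_isUnit_det g₁).1 hu1),
        Matrix.nonsing_inv_mul g₂ ((Matrix.isUnit_iff_isUnit_det g₂).1 hu2),
        Matrix.nonsing_inv_mul g₃ ((Matrix.isUnit_iff_isUnit_det g₃).1 hu3), act_one]
    have hmem : r ∈ {m : ℕ | Restrict3 (unitTensor3 K m) T} :=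
      restrict3_trans (unit_restrict_of_memXr hr S hS) hST
    exact le_csSup hbdd hmem
end

section
/- Let K be an algebraically closed field and k ≥ 3 an integer. For every positive integer n there exist k-tensors S, T ∈ K^{n,…,n} such that Q(S)^{k−1} ≤ kn − (k−1) and Q(T)^{k−1} ≤ kn − (k−1), while Q(S ⊕ T) ≥ n. (Subrank of k-tensors is not additive under the direct sum.) -/
/-- The direct sum `S ⊕ T` of two order-`k` tensors in `K^{n,…,n}`, as a tensor in
`K^{2n,…,2n}`. -/
def dsumK {K : Type*} [CommRing K] {k n : ℕ}
    (S T : TensorK K (fun _ : Fin k => n)) : TensorK K (fun _ : Fin k => 2 * n) :=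
  fun i =>
    if h : ∀ j, (i j : ℕ) < n then S (fun j => ⟨i j, h j⟩)
    else if h' : ∀ j, n ≤ (i j : ℕ) then
      T (fun j => ⟨(i j : ℕ) - n, by
        have h1 : (i j : ℕ) < 2 * n := (i j).isLt
        have h2 := h' j
        show (i j : ℕ) - n < n
        omega⟩)
    else 0

lemma deltaSum {k : ℕ} {m : Fin k → ℕ} {R : Type*} [CommRing R]
    (F : (∀ j, Fin (m j)) → R) (b : ∀ j, Fin (m j)) :
    ∑ a : ∀ j, Fin (m j), (∏ j, if a j = b j then (1:R) else 0) * F a = F b := by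
  rw [Fintype.sum_eq_single b]
  · simp
  · intro a hab
    obtain ⟨j, hj⟩ := Function.ne_iff.mp hab
    rw [Finset.prod_eq_zero (Finset.mem_univ j) (by simp [hj]), zero_mul]

lemma RestrictK.trans {K : Type*} [CommRing K] {k : ℕ} {m n q : Fin k → ℕ}
    {S : TensorK K m} {T : TensorK K n} {U : TensorK K q}
    (h1 : RestrictK S T) (h2 : RestrictK T U) : RestrictK S U := by
  obtain ⟨A, hA⟩ := h1; obtain ⟨B, hB⟩ := h2
  refine ⟨fun j => A j * B j, fun i => ?_⟩
  calc S i = ∑ a : ∀ j, Fin (n j), (∏ j, A j (i j) (a j)) *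
        ∑ b : ∀ j, Fin (q j), (∏ j, B j (a j) (b j)) * U b := by rw [hA i]; simp only [hB]
    _ = ∑ a : ∀ j, Fin (n j), ∑ b : ∀ j, Fin (q j),
        (∏ j, A j (i j) (a j) * B j (a j) (b j)) * U b := by
        refine Finset.sum_congr rfl fun a _ => ?_
        rw [Finset.mul_sum]
        refine Finset.sum_congr rfl fun b _ => ?_
        rw [← mul_assoc, ← Finset.prod_mul_distrib]
    _ = ∑ b : ∀ j, Fin (q j), (∑ a : ∀ j, Fin (n j),
        ∏ j, A j (i j) (a j) * B j (a j) (b j)) * U b := by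
        rw [Finset.sum_comm]
        simp [Finset.sum_mul]
    _ = ∑ b : ∀ j, Fin (q j), (∏ j, (A j * B j) (i j) (b j)) * U b := by
        refine Finset.sum_congr rfl fun b _ => ?_
        rw [← Fintype.prod_sum fun j α => A j (i j) α * B j α (b j)]
        simp [Matrix.mul_apply]

lemma restrict_unit_mono {K : Type*} [CommRing K] {k : ℕ} {a b : ℕ} (hab : a ≤ b) :
    RestrictK (unitTensorK K k a) (unitTensorK K k b) := by
  refine ⟨fun _ i c => if c = Fin.castLE hab i then 1 else 0, fun i => ?_⟩
  rw [deltaSum (F := unitTensorK K k b) (b := fun j => Fin.castLE hab (i j))]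
  unfold unitTensorK
  congr 1
  simp only [eq_iff_iff]
  constructor
  · intro h j j'; rw [h j j']
  · intro h j j'; exact Fin.castLE_injective hab (h j j')

lemma restrict_unit_zero {K : Type*} [CommRing K] {k : ℕ} (hk : 0 < k) {n : Fin k → ℕ}
    (T : TensorK K n) : RestrictK (unitTensorK K k 0) T :=
  ⟨fun j => fun i _ => i.elim0, fun i => (i ⟨0, hk⟩).elim0⟩

lemma rightInverse_of_restrict_unit {K : Type*} [Field K] {k r : ℕ} (hk : 2 ≤ k)
    {n : Fin k → ℕ} {T : TensorK K n} {A : ∀ j, Matrix (Fin r) (Fin (n j)) K}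
    (hA : ∀ i, unitTensorK K k r i = ∑ a : ∀ j, Fin (n j), (∏ j, A j (i j) (a j)) * T a)
    (j₀ : Fin k) :
    ∃ C : Matrix (Fin (n j₀)) (Fin r) K, A j₀ * C = 1 := by
  classical
  refine ⟨fun c i' => ∑ b : ∀ j, Fin (n j), if b j₀ = c then
      (∏ j ∈ Finset.univ.erase j₀, A j i' (b j)) * T b else 0, ?_⟩
  ext i i'
  refine (Matrix.mul_apply).trans ?_
  beta_reduce
  have key : ∀ b : ∀ j, Fin (n j),
      (∏ j, A j ((Function.update (fun _ => i') j₀ i : ∀ _ : Fin k, Fin r) j) (b j))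
      = A j₀ i (b j₀) * ∏ j ∈ Finset.univ.erase j₀, A j i' (b j) := by
    intro b
    rw [← Finset.mul_prod_erase Finset.univ _ (Finset.mem_univ j₀)]
    congr 1
    · rw [Function.update_self]
    · exact Finset.prod_congr rfl fun j hj =>
        by rw [Function.update_of_ne (Finset.ne_of_mem_erase hj)]
  have := hA (Function.update (fun _ => i') j₀ i)
  rw [show (∑ c, A j₀ i c * ∑ b : ∀ j, Fin (n j), if b j₀ = c then
      (∏ j ∈ Finset.univ.erase j₀, A j i' (b j)) * T b else 0)
      = ∑ b : ∀ j, Fin (n j), (∏ j, A j ((Function.update (fun _ => i') j₀ i :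
        ∀ _ : Fin k, Fin r) j) (b j)) * T b from ?_, ← this]
  · unfold unitTensorK
    by_cases h : i = i'
    · subst h
      rw [if_pos, Matrix.one_apply_eq]
      intro j j'
      simp [Function.update]
    · have hj₁ : ∃ j₁ : Fin k, j₁ ≠ j₀ := by
        by_cases h0 : j₀ = ⟨0, by omega⟩
        · exact ⟨⟨1, by omega⟩, by rw [h0]; simp [Fin.ext_iff]⟩
        · exact ⟨⟨0, by omega⟩, fun hc => h0 hc.symm⟩
      obtain ⟨j₁, hj₁⟩ := hj₁
      rw [if_neg, Matrix.one_apply_ne h]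
      intro hall
      have := hall j₀ j₁
      rw [Function.update_self, Function.update_of_ne hj₁] at this
      exact h this
  · simp only [Finset.mul_sum, mul_ite, mul_zero]
    rw [Finset.sum_comm]
    refine Finset.sum_congr rfl fun b _ => ?_
    rw [Finset.sum_ite_eq Finset.univ (b j₀)]
    simp [key b, mul_assoc]

lemma le_of_restrict_unit {K : Type*} [Field K] {k r : ℕ} (hk : 2 ≤ k)
    {n : Fin k → ℕ} {T : TensorK K n}
    (h : RestrictK (unitTensorK K k r) T) (j₀ : Fin k) : r ≤ n j₀ := by
  obtain ⟨A, hA⟩ := h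
  obtain ⟨C, hC⟩ := rightInverse_of_restrict_unit hk hA j₀
  have h1 : ((1 : Matrix (Fin r) (Fin r) K)).rank = r := by
    rw [Matrix.rank_one, Fintype.card_fin]
  calc r = ((1 : Matrix (Fin r) (Fin r) K)).rank := h1.symm
    _ = (A j₀ * C).rank := by rw [hC]
    _ ≤ C.rank := Matrix.rank_mul_le_right _ _
    _ ≤ Fintype.card (Fin (n j₀)) := Matrix.rank_le_card_height C
    _ = n j₀ := Fintype.card_fin _

lemma bddAbove_subrank_set {K : Type*} [Field K] {k : ℕ} (hk : 2 ≤ k)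
    {n : Fin k → ℕ} (T : TensorK K n) :
    BddAbove {r : ℕ | RestrictK (unitTensorK K k r) T} :=
  ⟨n ⟨0, by omega⟩, fun r hr => le_of_restrict_unit hk hr ⟨0, by omega⟩⟩

open MvPolynomial

lemma totalDegree_aeval_monomial_le {ι κ : Type*} [Fintype ι] [Fintype κ] {K : Type*}
    [CommRing K] (v : κ → MvPolynomial ι K) (e : ℕ) (he : ∀ a, (v a).totalDegree ≤ e)
    (m : κ →₀ ℕ) (c : K) :
    (MvPolynomial.aeval v (MvPolynomial.monomial m c)).totalDegree ≤ (∑ a, m a) * e := by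
  rw [MvPolynomial.aeval_monomial]
  refine le_trans (MvPolynomial.totalDegree_mul _ _) ?_
  have h1 : (algebraMap K (MvPolynomial ι K) c).totalDegree = 0 := MvPolynomial.totalDegree_C c
  rw [h1, zero_add]
  rw [Finsupp.prod]
  refine le_trans (MvPolynomial.totalDegree_finset_prod _ _) ?_
  calc ∑ a ∈ m.support, ((v a) ^ (m a)).totalDegree
      ≤ ∑ a ∈ m.support, (m a) * e := by
        refine Finset.sum_le_sum fun a _ => ?_
        exact le_trans (MvPolynomial.totalDegree_pow _ _)
          (Nat.mul_le_mul_left _ (he a))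
    _ ≤ ∑ a, (m a) * e := Finset.sum_le_sum_of_subset (Finset.subset_univ _)
    _ = (∑ a, m a) * e := by rw [Finset.sum_mul]

lemma exists_annihilator {K : Type*} [Field K] {ι κ : Type*} [Fintype ι] [Fintype κ]
    [DecidableEq ι] [DecidableEq κ]
    (hcard : Fintype.card ι < Fintype.card κ) (v : κ → MvPolynomial ι K) :
    ∃ p : MvPolynomial κ K, p ≠ 0 ∧ MvPolynomial.aeval v p = 0 := by
  classical
  set N := Fintype.card κ with hN
  set d := Fintype.card ι with hd
  set e := (∑ a, (v a).totalDegree) + 1 with he_def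
  have he : ∀ a, (v a).totalDegree ≤ e := fun a => Nat.le_succ_of_le
    (Finset.single_le_sum (f := fun a => (v a).totalDegree) (fun a _ => Nat.zero_le _)
      (Finset.mem_univ a))
  have he1 : 1 ≤ e := Nat.le_add_left 1 _
  have hN1 : 1 ≤ N := lt_of_le_of_lt (Nat.zero_le _) hcard
  set D := (N * e + 1) ^ (d + 1) with hD
  have hD1 : 1 ≤ D := Nat.one_le_pow _ _ (by positivity)
  set M := N * D * e with hM
  -- monomial encodings
  set fs : (κ → Fin (D + 1)) → (κ →₀ ℕ) :=
    fun g => Finsupp.equivFunOnFinite.symm (fun a => (g a : ℕ)) with hfs_def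
  have hfs_apply : ∀ g a, fs g a = (g a : ℕ) := fun g a => rfl
  have hfs_inj : Function.Injective fs := by
    intro g g' h
    funext a
    have := congrFun (congrArg (fun x : κ →₀ ℕ => (x : κ → ℕ)) h) a
    simpa [Fin.ext_iff, hfs_apply] using this
  set fs' : (ι → Fin (M + 1)) → (ι →₀ ℕ) :=
    fun g => Finsupp.equivFunOnFinite.symm (fun a => (g a : ℕ)) with hfs'_def
  -- the linear maps
  set P : ((κ → Fin (D + 1)) → K) →ₗ[K] MvPolynomial κ K :=
    ∑ g : κ → Fin (D + 1), LinearMap.smulRight (LinearMap.proj g) (monomial (fs g) 1)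
    with hP
  have hP_apply : ∀ c, P c = ∑ g : κ → Fin (D + 1), c g • monomial (fs g) (1 : K) := by
    intro c
    rw [hP]
    simp [LinearMap.sum_apply]
  have hP_coeff : ∀ c g₀, coeff (fs g₀) (P c) = c g₀ := by
    intro c g₀
    rw [hP_apply]
    rw [show coeff (fs g₀) (∑ g : κ → Fin (D+1), c g • monomial (fs g) (1:K))
      = ∑ g : κ → Fin (D+1), c g • coeff (fs g₀) (monomial (fs g) (1:K)) by
        rw [MvPolynomial.coeff_sum]; exact Finset.sum_congr rfl fun g _ => by
          rw [MvPolynomial.coeff_smul]]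
    rw [Fintype.sum_eq_single g₀]
    · simp [MvPolynomial.coeff_monomial]
    · intro g hg
      rw [MvPolynomial.coeff_monomial, if_neg (fun hc => hg (hfs_inj hc))]
      simp
  set Ψ : ((κ → Fin (D + 1)) → K) →ₗ[K] ((ι → Fin (M + 1)) → K) :=
    (LinearMap.pi (fun gb => MvPolynomial.lcoeff K (fs' gb))).comp
      ((MvPolynomial.aeval v).toLinearMap.comp P) with hΨ
  have hΨ_apply : ∀ c gb, Ψ c gb = coeff (fs' gb) (MvPolynomial.aeval v (P c)) := by
    intro c gb; rfl
  -- dimension comparison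
  have hdim : (M + 1) ^ d < (D + 1) ^ N := by
    have s1 : M + 1 ≤ D * (N * e + 1) := by
      rw [hM]; nlinarith [hD1]
    have s2 : (M+1)^d ≤ (D * (N*e+1))^d := Nat.pow_le_pow_left s1 d
    have s3 : (D * (N*e+1))^d = D^d * (N*e+1)^d := mul_pow D _ d
    have s4 : (N*e+1)^d < D := by
      rw [hD]
      exact Nat.pow_lt_pow_succ (by nlinarith)
    have s5 : D^d * (N*e+1)^d < D^d * D :=
      (Nat.mul_lt_mul_left (Nat.pow_pos hD1)).mpr s4
    have s6 : D^d * D = D^(d+1) := (pow_succ D d).symm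
    have s7 : D^(d+1) ≤ (D+1)^(d+1) := Nat.pow_le_pow_left (Nat.le_succ D) _
    have s8 : (D+1)^(d+1) ≤ (D+1)^N := Nat.pow_le_pow_right (by omega) hcard
    omega
  -- Ψ is not injective
  have hnotinj : ¬ Function.Injective Ψ := by
    intro hinj
    have hle := LinearMap.finrank_le_finrank_of_injective hinj
    rw [Module.finrank_fintype_fun_eq_card, Module.finrank_fintype_fun_eq_card] at hle
    rw [Fintype.card_fun, Fintype.card_fun] at hle
    simp only [Fintype.card_fin] at hle
    rw [← hN, ← hd] at hle
    omega
  obtain ⟨c₁, c₂, hc12, hcne⟩ := Function.not_injective_iff.mp hnotinj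
  set c := c₁ - c₂ with hc
  have hc0 : c ≠ 0 := sub_ne_zero_of_ne hcne
  have hΨc : Ψ c = 0 := by rw [hc, map_sub, hc12, sub_self]
  refine ⟨P c, ?_, ?_⟩
  · intro hPc
    obtain ⟨g₀, hg₀⟩ := Function.ne_iff.mp hc0
    have := hP_coeff c g₀
    rw [hPc] at this
    simp at this
    exact hg₀ this.symm
  · -- aeval v (P c) = 0
    set q := MvPolynomial.aeval v (P c) with hq
    have hqdeg : q.totalDegree ≤ M := by
      rw [hq, hP_apply, map_sum]
      refine le_trans (MvPolynomial.totalDegree_finset_sum _ _) (Finset.sup_le ?_)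
      intro g _
      rw [map_smul]
      refine le_trans (MvPolynomial.totalDegree_smul_le _ _) ?_
      refine le_trans (totalDegree_aeval_monomial_le v e he (fs g) 1) ?_
      have : ∑ a, fs g a ≤ N * D := by
        refine le_trans (Finset.sum_le_card_nsmul Finset.univ _ D ?_) ?_
        · intro a _
          exact Nat.lt_succ_iff.mp (by simpa [hfs_apply] using (g a).isLt)
        · simp [hN, mul_comm]
      calc (∑ a, fs g a) * e ≤ (N * D) * e := Nat.mul_le_mul_right e this
        _ = M := rfl
    ext m
    rw [MvPolynomial.coeff_zero]
    by_cases hm : ∀ i, m i ≤ M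
    · have hmfs : m = fs' (fun i => ⟨m i, Nat.lt_succ_of_le (hm i)⟩) := by
        ext i; rfl
    -- use Ψ c = 0
      have := congrFun hΨc (fun i => (⟨m i, Nat.lt_succ_of_le (hm i)⟩ : Fin (M+1)))
      rw [hΨ_apply] at this
      rw [hmfs]
      exact this
    · push_neg at hm
      obtain ⟨i, hi⟩ := hm
      refine MvPolynomial.coeff_eq_zero_of_totalDegree_lt ?_
      have hisupp : i ∈ m.support := Finsupp.mem_support_iff.mpr (by omega)
      have : M < ∑ j ∈ m.support, m j :=
        lt_of_lt_of_le hi (Finset.single_le_sum (fun j _ => Nat.zero_le _) hisupp)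
      exact lt_of_le_of_lt hqdeg this

lemma exists_invertible_submatrix {K : Type*} [Field K] {r n : ℕ}
    (A : Matrix (Fin r) (Fin n) K) (C : Matrix (Fin n) (Fin r) K) (hC : A * C = 1) :
    ∃ s : Fin r → Fin n, Function.Injective s ∧
      IsUnit (Matrix.det (Matrix.of fun i i' => A i (s i'))) := by
  classical
  set cols : Fin n → (Fin r → K) := fun c i => A i c with hcols
  have hmulvec : ∀ x : Fin n → K, A.mulVec x = ∑ c, x c • cols c := by
    intro x
    funext i
    rw [Matrix.mulVec, dotProduct]
    rw [Finset.sum_apply]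
    exact Finset.sum_congr rfl fun c _ => by simp [hcols, mul_comm]
  have hspan : Submodule.span K (Set.range cols) = ⊤ := by
    rw [Submodule.eq_top_iff']
    intro y
    have hy : y = A.mulVec (C.mulVec y) := by
      rw [Matrix.mulVec_mulVec, hC, Matrix.one_mulVec]
    rw [hy, hmulvec]
    exact Submodule.sum_mem _ fun c _ => Submodule.smul_mem _ _
      (Submodule.subset_span (Set.mem_range_self c))
  obtain ⟨b, hb, hbspan, hbli⟩ := exists_linearIndependent K (Set.range cols)
  rw [hspan] at hbspan
  have hbfin : b.Finite := (Set.finite_range cols).subset hb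
  haveI : Fintype b := hbfin.fintype
  have hbasis : Module.Basis b K (Fin r → K) := Module.Basis.mk hbli (by rw [Subtype.range_coe]; rw [hbspan])
  have hcardb : Fintype.card b = r := by
    have h1 := Module.finrank_eq_card_basis hbasis
    rw [Module.finrank_fintype_fun_eq_card, Fintype.card_fin] at h1
    omega
  set m : b → Fin n := fun x => (hb x.2).choose with hm
  have hmspec : ∀ x : b, cols (m x) = (x : Fin r → K) := fun x => (hb x.2).choose_spec
  let e : Fin r ≃ b := (Fintype.equivFinOfCardEq hcardb).symm
  refine ⟨fun i => m (e i), ?_, ?_⟩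
  · intro i i' h
    simp only at h
    have : cols (m (e i)) = cols (m (e i')) := by rw [h]
    rw [hmspec, hmspec] at this
    exact e.injective (Subtype.val_injective this)
  · rw [isUnit_iff_ne_zero]
    intro hdet
    obtain ⟨v, hv0, hvz⟩ := (Matrix.exists_mulVec_eq_zero_iff).mpr hdet
    have hform : (Matrix.of fun i i' => A i (m (e i'))).mulVec v
        = ∑ i', v i' • ((e i' : Fin r → K)) := by
      funext i
      rw [Matrix.mulVec, dotProduct, Finset.sum_apply]
      refine Finset.sum_congr rfl fun i' _ => ?_
      rw [← hmspec (e i')]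
      simp [hcols, mul_comm]
    rw [hform] at hvz
    have hli : LinearIndependent K (fun i' : Fin r => ((e i' : Fin r → K))) := by
      have := hbli.comp e e.injective
      exact this
    have := Fintype.linearIndependent_iff.mp hli v hvz
    exact hv0 (funext fun i => this i)


lemma normalize_witness {K : Type*} [Field K] {k r n : ℕ} (hk : 2 ≤ k)
    {T : TensorK K (fun _ : Fin k => n)}
    (h : RestrictK (unitTensorK K k r) T) :
    ∃ (s : Fin k → Fin r → Fin n) (τ : Fin k → Fin r → Fin r)
      (A : Fin k → Matrix (Fin r) (Fin n) K),
      (∀ i : Fin k → Fin r, unitTensorK K k r i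
          = ∑ a : Fin k → Fin n, (∏ j, A j (i j) (a j)) * T a) ∧
      (∀ j, Function.Injective (s j)) ∧
      (∀ (j : Fin k) (i : Fin r), (j : ℕ) + 2 ≤ k → A j i (s j (τ j i)) = 1) ∧
      (∀ j, IsUnit (Matrix.det (Matrix.of fun i i' => A j i (s j i')))) := by
  classical
  obtain ⟨A, hA⟩ := h
  have hstep : ∀ j : Fin k, ∃ s : Fin r → Fin n, Function.Injective s ∧
      IsUnit (Matrix.det (Matrix.of fun i i' => A j i (s i'))) := by
    intro j
    obtain ⟨C, hC⟩ := rightInverse_of_restrict_unit hk hA j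
    exact exists_invertible_submatrix (A j) C hC
  choose s hsinj hsdet using hstep
  have hτ : ∀ (j : Fin k) (i : Fin r), ∃ i', A j i (s j i') ≠ 0 := by
    intro j i
    by_contra hc
    push_neg at hc
    have : Matrix.det (Matrix.of fun i i' => A j i (s j i')) = 0 :=
      Matrix.det_eq_zero_of_row_eq_zero i (fun i' => hc i')
    have hd := hsdet j
    rw [this] at hd
    exact hd.ne_zero rfl
  choose τ hτne using hτ
  set D : Fin k → Fin r → K := fun j i => A j i (s j (τ j i)) with hD_def
  have hD : ∀ j i, D j i ≠ 0 := fun j i => hτne j i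
  set coef : Fin k → Fin r → K := fun j i =>
    if (j : ℕ) + 2 ≤ k then (D j i)⁻¹
    else ∏ j' ∈ Finset.univ.filter (fun j' : Fin k => (j' : ℕ) + 2 ≤ k), D j' i
    with hcoef_def
  have hcoef_ne : ∀ j i, coef j i ≠ 0 := by
    intro j i
    by_cases hj : (j : ℕ) + 2 ≤ k
    · simp only [hcoef_def, if_pos hj]
      exact inv_ne_zero (hD j i)
    · simp only [hcoef_def, if_neg hj]
      exact Finset.prod_ne_zero_iff.mpr fun j' _ => hD j' i
  have hfilter_not : Finset.univ.filter (fun j' : Fin k => ¬((j' : ℕ) + 2 ≤ k))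
      = {(⟨k - 1, by omega⟩ : Fin k)} := by
    ext j
    simp only [Finset.mem_filter, Finset.mem_univ, true_and, Finset.mem_singleton,
      Fin.ext_iff]
    have hlt := j.isLt
    have hv : ((⟨k - 1, by omega⟩ : Fin k) : ℕ) = k - 1 := rfl
    constructor
    · intro hj; omega
    · intro hj; omega
  have hfac : ∀ i₀ : Fin r, ∏ j, coef j i₀ = 1 := by
    intro i₀
    rw [← Finset.prod_filter_mul_prod_filter_not Finset.univ
      (fun j : Fin k => (j : ℕ) + 2 ≤ k) (fun j => coef j i₀)]
    rw [hfilter_not, Finset.prod_singleton]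
    have h1 : ∀ j ∈ Finset.univ.filter (fun j' : Fin k => (j' : ℕ) + 2 ≤ k),
        coef j i₀ = (D j i₀)⁻¹ := by
      intro j hj
      rw [Finset.mem_filter] at hj
      rw [hcoef_def]
      exact if_pos hj.2
    rw [Finset.prod_congr rfl h1]
    have h2 : coef (⟨k - 1, by omega⟩ : Fin k) i₀
        = ∏ j' ∈ Finset.univ.filter (fun j' : Fin k => (j' : ℕ) + 2 ≤ k), D j' i₀ := by
      rw [hcoef_def]
      exact if_neg (by simp; omega)
    rw [h2, ← Finset.prod_mul_distrib]
    exact Finset.prod_eq_one fun j hj => inv_mul_cancel₀ (hD j i₀)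
  refine ⟨s, τ, fun j => Matrix.of fun i c => coef j i * A j i c, ?_, hsinj, ?_, ?_⟩
  · intro i
    have key : ∀ a : Fin k → Fin n,
        (∏ j, coef j (i j) * A j (i j) (a j))
          = (∏ j, coef j (i j)) * ∏ j, A j (i j) (a j) := fun a =>
      Finset.prod_mul_distrib
    have step : ∑ a : Fin k → Fin n, (∏ j, coef j (i j) * A j (i j) (a j)) * T a
        = (∏ j, coef j (i j)) * unitTensorK K k r i := by
      rw [hA i, Finset.mul_sum]
      exact Finset.sum_congr rfl fun a _ => by rw [key a]; ring
    simp only [Matrix.of_apply]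
    rw [step]
    by_cases hdiag : ∀ j j' : Fin k, i j = i j'
    · have h0 : (∏ j, coef j (i j)) = ∏ j, coef j (i ⟨0, by omega⟩) :=
        Finset.prod_congr rfl fun j _ => by rw [hdiag j ⟨0, by omega⟩]
      rw [h0, hfac, one_mul]
    · simp only [unitTensorK, if_neg hdiag, mul_zero]
  · intro j i hj
    simp only [Matrix.of_apply]
    rw [show coef j i = (D j i)⁻¹ from if_pos hj]
    exact inv_mul_cancel₀ (hD j i)
  · intro j
    have heq : (Matrix.of fun i i' => (Matrix.of fun i c => coef j i * A j i c) i (s j i'))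
        = Matrix.diagonal (fun i => coef j i) * Matrix.of (fun i i' => A j i (s j i')) := by
      ext i i'
      rw [Matrix.diagonal_mul]
      rfl
    rw [heq, Matrix.det_mul, Matrix.det_diagonal]
    exact ((isUnit_iff_ne_zero.mpr (Finset.prod_ne_zero_iff.mpr fun i _ =>
      hcoef_ne j i)).mul (hsdet j))

open MvPolynomial in
/-- Variable index type for the parametrization of a stratum. -/
abbrev StratIdx (k r n : ℕ) (s : Fin k → Fin r → Fin n) (τ : Fin k → Fin r → Fin r) : Type :=
  {v : Fin k × Fin r × Fin n // ¬((v.1 : ℕ) + 2 ≤ k ∧ v.2.2 = s v.1 (τ v.1 v.2.1))} ⊕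
  ({a : Fin k → Fin n // ¬∃ c : Fin k → Fin r, (fun j => s j (c j)) = a} ⊕ Unit)

noncomputable def stratPA (K : Type*) [Field K] (k r n : ℕ) (s : Fin k → Fin r → Fin n)
    (τ : Fin k → Fin r → Fin r) (j : Fin k) (i : Fin r) (c : Fin n) :
    MvPolynomial (StratIdx k r n s τ) K :=
  if h : (j : ℕ) + 2 ≤ k ∧ c = s j (τ j i) then 1
  else MvPolynomial.X (Sum.inl ⟨(j, i, c), h⟩)

noncomputable def stratW (K : Type*) [Field K] (k r n : ℕ) (s : Fin k → Fin r → Fin n)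
    (τ : Fin k → Fin r → Fin r) (a : Fin k → Fin n) :
    MvPolynomial (StratIdx k r n s τ) K :=
  if h : ∃ c : Fin k → Fin r, (fun j => s j (c j)) = a then 0
  else MvPolynomial.X (Sum.inr (Sum.inl ⟨a, h⟩))

noncomputable def stratG (K : Type*) [Field K] (k r n : ℕ) (s : Fin k → Fin r → Fin n)
    (τ : Fin k → Fin r → Fin r) (a : Fin k → Fin n) :
    MvPolynomial (StratIdx k r n s τ) K :=
  if h : ∃ c : Fin k → Fin r, (fun j => s j (c j)) = a then
    MvPolynomial.X (Sum.inr (Sum.inr ())) *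
      ∑ b : Fin k → Fin r,
        (∏ j, (Matrix.of fun i i' => stratPA K k r n s τ j i (s j i')).adjugate (h.choose j) (b j)) *
        ((if ∀ j j' : Fin k, b j = b j' then 1 else 0) -
          ∑ a' : Fin k → Fin n, (∏ j, stratPA K k r n s τ j (b j) (a' j)) * stratW K k r n s τ a')
  else MvPolynomial.X (Sum.inr (Sum.inl ⟨a, h⟩))

lemma card_strIA {k r n : ℕ} (s : Fin k → Fin r → Fin n) (τ : Fin k → Fin r → Fin r) :
    Fintype.card {v : Fin k × Fin r × Fin n //
        ¬((v.1 : ℕ) + 2 ≤ k ∧ v.2.2 = s v.1 (τ v.1 v.2.1))} + (k - 1) * r = k * r * n := by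
  have h1 : Fintype.card {v : Fin k × Fin r × Fin n //
      ((v.1 : ℕ) + 2 ≤ k ∧ v.2.2 = s v.1 (τ v.1 v.2.1))} = (k - 1) * r := by
    have e2 : {j : Fin k // (j : ℕ) + 2 ≤ k} ≃ Fin (k - 1) :=
      { toFun := fun j => ⟨(j : Fin k), by have := j.2; omega⟩
        invFun := fun m => ⟨⟨(m : ℕ), by have := m.isLt; omega⟩, by
          have := m.isLt
          show (m : ℕ) + 2 ≤ k
          omega⟩
        left_inv := fun j => Subtype.ext (Fin.ext rfl)
        right_inv := fun m => Fin.ext rfl }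
    have e : {v : Fin k × Fin r × Fin n // ((v.1 : ℕ) + 2 ≤ k ∧ v.2.2 = s v.1 (τ v.1 v.2.1))}
        ≃ {j : Fin k // (j : ℕ) + 2 ≤ k} × Fin r :=
      { toFun := fun v => (⟨v.1.1, v.2.1⟩, v.1.2.1)
        invFun := fun w => ⟨(w.1.1, w.2, s w.1.1 (τ w.1.1 w.2)), ⟨w.1.2, rfl⟩⟩
        left_inv := by
          rintro ⟨⟨j, i, c⟩, hv⟩
          apply Subtype.ext
          have h2 : c = s j (τ j i) := hv.2
          show (j, i, s j (τ j i)) = (j, i, c)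
          rw [h2]
        right_inv := by rintro ⟨⟨j, hj⟩, i⟩; rfl }
    rw [Fintype.card_congr e, Fintype.card_prod, Fintype.card_fin,
      Fintype.card_congr e2, Fintype.card_fin]
  have h2 : Fintype.card {v : Fin k × Fin r × Fin n //
        ¬((v.1 : ℕ) + 2 ≤ k ∧ v.2.2 = s v.1 (τ v.1 v.2.1))}
      = Fintype.card (Fin k × Fin r × Fin n) - Fintype.card {v : Fin k × Fin r × Fin n //
        ((v.1 : ℕ) + 2 ≤ k ∧ v.2.2 = s v.1 (τ v.1 v.2.1))} :=
    Fintype.card_subtype_compl _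
  have h3 := Fintype.card_subtype_le (fun v : Fin k × Fin r × Fin n =>
    ((v.1 : ℕ) + 2 ≤ k ∧ v.2.2 = s v.1 (τ v.1 v.2.1)))
  have h4 : Fintype.card (Fin k × Fin r × Fin n) = k * r * n := by
    simp [Fintype.card_prod, mul_assoc]
  rw [h2, h1, h4]
  rw [h1, h4] at h3
  exact Nat.sub_add_cancel h3

lemma card_strIW {k r n : ℕ} (s : Fin k → Fin r → Fin n) (hs : ∀ j, Function.Injective (s j)) :
    Fintype.card {a : Fin k → Fin n // ¬∃ c : Fin k → Fin r, (fun j => s j (c j)) = a} + r ^ k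
      = n ^ k := by
  have h1 : Fintype.card {a : Fin k → Fin n // ∃ c : Fin k → Fin r, (fun j => s j (c j)) = a}
      = r ^ k := by
    have e : (Fin k → Fin r) ≃ {a : Fin k → Fin n // ∃ c : Fin k → Fin r, (fun j => s j (c j)) = a} :=
      Equiv.ofBijective (fun c => ⟨fun j => s j (c j), ⟨c, rfl⟩⟩) (by
        constructor
        · intro c c' hcc
          funext j
          exact hs j (congrFun (congrArg Subtype.val hcc) j)
        · rintro ⟨a, ⟨c, hc⟩⟩
          exact ⟨c, Subtype.ext hc⟩)
    rw [← Fintype.card_congr e, Fintype.card_fun, Fintype.card_fin, Fintype.card_fin]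
  have h2 : Fintype.card {a : Fin k → Fin n // ¬∃ c : Fin k → Fin r, (fun j => s j (c j)) = a}
      = Fintype.card (Fin k → Fin n) - Fintype.card {a : Fin k → Fin n //
        ∃ c : Fin k → Fin r, (fun j => s j (c j)) = a} := Fintype.card_subtype_compl _
  have h3 := Fintype.card_subtype_le (fun a : Fin k → Fin n =>
    ∃ c : Fin k → Fin r, (fun j => s j (c j)) = a)
  have h4 : Fintype.card (Fin k → Fin n) = n ^ k := by
    rw [Fintype.card_fun, Fintype.card_fin, Fintype.card_fin]
  rw [h2, h1, h4]
  rw [h1, h4] at h3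
  exact Nat.sub_add_cancel h3

lemma stratum_vanish {K : Type*} [Field K] {k r n : ℕ} (hrn : r ≤ n)
    (s : Fin k → Fin r → Fin n) (τ : Fin k → Fin r → Fin r)
    (hs : ∀ j, Function.Injective (s j))
    (hbig : k * r * n + 2 ≤ (k - 1) * r + r ^ k) :
    ∃ p : MvPolynomial (Fin k → Fin n) K, p ≠ 0 ∧
      ∀ T : TensorK K (fun _ : Fin k => n),
        (∃ A : Fin k → Matrix (Fin r) (Fin n) K,
          (∀ i : Fin k → Fin r, unitTensorK K k r i
              = ∑ a : Fin k → Fin n, (∏ j, A j (i j) (a j)) * T a) ∧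
          (∀ (j : Fin k) (i : Fin r), (j : ℕ) + 2 ≤ k → A j i (s j (τ j i)) = 1) ∧
          (∀ j, IsUnit (Matrix.det (Matrix.of fun i i' => A j i (s j i'))))) →
        MvPolynomial.eval T p = 0 := by
  classical
  have hcard : Fintype.card (StratIdx k r n s τ) < Fintype.card (Fin k → Fin n) := by
    have h1 := card_strIA s τ
    have h2 := card_strIW s hs
    have h3 : Fintype.card (StratIdx k r n s τ)
        = Fintype.card {v : Fin k × Fin r × Fin n //
            ¬((v.1 : ℕ) + 2 ≤ k ∧ v.2.2 = s v.1 (τ v.1 v.2.1))}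
          + (Fintype.card {a : Fin k → Fin n // ¬∃ c : Fin k → Fin r, (fun j => s j (c j)) = a}
          + 1) := by
      simp [Fintype.card_sum]
    have h4 : Fintype.card (Fin k → Fin n) = n ^ k := by
      rw [Fintype.card_fun, Fintype.card_fin, Fintype.card_fin]
    have h5 : r ^ k ≤ n ^ k := Nat.pow_le_pow_left hrn k
    rw [h3, h4]
    linarith
  obtain ⟨p, hp0, hpann⟩ := exists_annihilator hcard (stratG K k r n s τ)
  refine ⟨p, hp0, ?_⟩
  rintro T ⟨A, hres, hnorm, hdet⟩
  set QA : Fin k → Matrix (Fin r) (Fin r) K := fun j => Matrix.of fun i i' => A j i (s j i')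
    with hQA
  have hdetne : ∀ j, (QA j).det ≠ 0 := fun j => isUnit_iff_ne_zero.mp (hdet j)
  set dz : K := ∏ j, (QA j).det with hdz_def
  have hdz : dz ≠ 0 := Finset.prod_ne_zero_iff.mpr fun j _ => hdetne j
  set x : StratIdx k r n s τ → K := fun v =>
    match v with
    | Sum.inl w => A w.1.1 w.1.2.1 w.1.2.2
    | Sum.inr (Sum.inl w) => T w.1
    | Sum.inr (Sum.inr _) => dz⁻¹
    with hx
  have hPA : ∀ (j : Fin k) (i : Fin r) (c : Fin n),
      MvPolynomial.eval x (stratPA K k r n s τ j i c) = A j i c := by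
    intro j i c
    by_cases h : (j : ℕ) + 2 ≤ k ∧ c = s j (τ j i)
    · rw [stratPA, dif_pos h, map_one]
      rw [h.2]
      exact (hnorm j i h.1).symm
    · rw [stratPA, dif_neg h, MvPolynomial.eval_X]
  have hW : ∀ a : Fin k → Fin n, MvPolynomial.eval x (stratW K k r n s τ a)
      = if ∃ c : Fin k → Fin r, (fun j => s j (c j)) = a then 0 else T a := by
    intro a
    by_cases h : ∃ c : Fin k → Fin r, (fun j => s j (c j)) = a
    · rw [stratW, dif_pos h, map_zero, if_pos h]
    · rw [stratW, dif_neg h, MvPolynomial.eval_X, if_neg h]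
  have hadj : ∀ (j : Fin k) (u v : Fin r),
      MvPolynomial.eval x ((Matrix.of fun i i' => stratPA K k r n s τ j i (s j i')).adjugate u v)
        = (QA j).adjugate u v := by
    intro j u v
    have h1 := RingHom.map_adjugate (MvPolynomial.eval x)
      (Matrix.of fun i i' => stratPA K k r n s τ j i (s j i'))
    rw [RingHom.mapMatrix_apply, RingHom.mapMatrix_apply] at h1
    have h2 : ((Matrix.of fun i i' => stratPA K k r n s τ j i (s j i')).map
        (MvPolynomial.eval x)) = QA j := by
      ext i i'
      simp only [Matrix.map_apply, Matrix.of_apply, hPA, hQA]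
    calc MvPolynomial.eval x ((Matrix.of fun i i' => stratPA K k r n s τ j i (s j i')).adjugate u v)
        = ((Matrix.of fun i i' => stratPA K k r n s τ j i (s j i')).adjugate.map
            (MvPolynomial.eval x)) u v := rfl
      _ = ((Matrix.of fun i i' => stratPA K k r n s τ j i (s j i')).map
            (MvPolynomial.eval x)).adjugate u v := by rw [h1]
      _ = (QA j).adjugate u v := by rw [h2]
  set e : (Fin k → Fin r) → (Fin k → Fin n) := fun c' => fun j => s j (c' j) with he_def
  have he_inj : Function.Injective e := by
    intro c1 c2 h
    funext j
    exact hs j (congrFun h j)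
  have hkey : ∀ a, MvPolynomial.eval x (stratG K k r n s τ a) = T a := by
    intro a
    by_cases h : ∃ c : Fin k → Fin r, (fun j => s j (c j)) = a
    · rw [stratG, dif_pos h]
      have hc : e h.choose = a := h.choose_spec
      set c : Fin k → Fin r := h.choose with hc_def
      rw [map_mul, map_sum]
      have hevalX : MvPolynomial.eval x (MvPolynomial.X (R := K)
          (Sum.inr (Sum.inr ()) : StratIdx k r n s τ)) = dz⁻¹ := by
        rw [MvPolynomial.eval_X]
      rw [hevalX]
      have hsummand : ∀ b : Fin k → Fin r,
          MvPolynomial.eval x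
            ((∏ j, (Matrix.of fun i i' => stratPA K k r n s τ j i (s j i')).adjugate (c j) (b j)) *
              ((if ∀ j j' : Fin k, b j = b j' then 1 else 0) -
                ∑ a' : Fin k → Fin n, (∏ j, stratPA K k r n s τ j (b j) (a' j)) *
                  stratW K k r n s τ a'))
          = (∏ j, (QA j).adjugate (c j) (b j)) *
              ((if ∀ j j' : Fin k, b j = b j' then (1 : K) else 0) -
                ∑ a' : Fin k → Fin n, (∏ j, A j (b j) (a' j)) *
                  (if ∃ c' : Fin k → Fin r, (fun j => s j (c' j)) = a' then 0 else T a')) := by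
        intro b
        rw [map_mul, map_sub, map_sum, map_prod]
        congr 1
        · exact Finset.prod_congr rfl fun j _ => hadj j (c j) (b j)
        congr 1
        · rw [apply_ite (MvPolynomial.eval x), map_one, map_zero]
        · refine Finset.sum_congr rfl fun a' _ => ?_
          rw [map_mul, map_prod, hW]
          congr 1
          exact Finset.prod_congr rfl fun j _ => hPA j (b j) (a' j)
      rw [Finset.sum_congr rfl fun b _ => hsummand b]
      have hinner : ∀ b : Fin k → Fin r,
          ((if ∀ j j' : Fin k, b j = b j' then (1 : K) else 0) -
              ∑ a' : Fin k → Fin n, (∏ j, A j (b j) (a' j)) *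
                (if ∃ c' : Fin k → Fin r, (fun j => s j (c' j)) = a' then 0 else T a'))
            = ∑ c' : Fin k → Fin r, (∏ j, QA j (b j) (c' j)) * T (e c') := by
        intro b
        have h0 : (if ∀ j j' : Fin k, b j = b j' then (1 : K) else 0) = unitTensorK K k r b := rfl
        rw [h0, hres b, ← Finset.sum_sub_distrib]
        have hterm : ∀ a' : Fin k → Fin n,
            (∏ j, A j (b j) (a' j)) * T a' - (∏ j, A j (b j) (a' j)) *
                (if ∃ c' : Fin k → Fin r, (fun j => s j (c' j)) = a' then 0 else T a')
            = if ∃ c' : Fin k → Fin r, (fun j => s j (c' j)) = a'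
                then (∏ j, A j (b j) (a' j)) * T a' else 0 := by
          intro a'
          by_cases hb : ∃ c' : Fin k → Fin r, (fun j => s j (c' j)) = a'
          · rw [if_pos hb, if_pos hb, mul_zero, sub_zero]
          · rw [if_neg hb, if_neg hb, sub_self]
        rw [Finset.sum_congr rfl fun a' _ => hterm a']
        refine (Fintype.sum_of_injective e he_inj _ _ ?_ ?_).symm
        · intro a' ha'
          rw [if_neg]
          intro ⟨c', hc'⟩
          exact ha' ⟨c', hc'⟩
        · intro c'
          rw [if_pos ⟨c', rfl⟩]
          rfl
      rw [Finset.sum_congr rfl fun b _ => by rw [hinner b]]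
      have hsum2 : ∑ b : Fin k → Fin r, (∏ j, (QA j).adjugate (c j) (b j)) *
          (∑ c' : Fin k → Fin r, (∏ j, QA j (b j) (c' j)) * T (e c')) = dz * T (e c) := by
        calc ∑ b : Fin k → Fin r, (∏ j, (QA j).adjugate (c j) (b j)) *
              (∑ c' : Fin k → Fin r, (∏ j, QA j (b j) (c' j)) * T (e c'))
            = ∑ b : Fin k → Fin r, ∑ c' : Fin k → Fin r,
                (∏ j, (QA j).adjugate (c j) (b j) * QA j (b j) (c' j)) * T (e c') := by
              refine Finset.sum_congr rfl fun b _ => ?_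
              rw [Finset.mul_sum]
              refine Finset.sum_congr rfl fun c' _ => ?_
              rw [← mul_assoc, ← Finset.prod_mul_distrib]
          _ = ∑ c' : Fin k → Fin r, (∑ b : Fin k → Fin r,
                ∏ j, (QA j).adjugate (c j) (b j) * QA j (b j) (c' j)) * T (e c') := by
              rw [Finset.sum_comm]
              simp [Finset.sum_mul]
          _ = ∑ c' : Fin k → Fin r, (∏ j, ((QA j).adjugate * QA j) (c j) (c' j)) * T (e c') := by
              refine Finset.sum_congr rfl fun c' _ => ?_
              congr 1
              rw [← Fintype.prod_sum fun j β => (QA j).adjugate (c j) β * QA j β (c' j)]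
              exact Finset.prod_congr rfl fun j _ => (Matrix.mul_apply).symm
          _ = ∑ c' : Fin k → Fin r, (dz * ∏ j, if c' j = c j then (1 : K) else 0) * T (e c') := by
              refine Finset.sum_congr rfl fun c' _ => ?_
              congr 1
              have hent : ∀ j, ((QA j).adjugate * QA j) (c j) (c' j)
                  = (QA j).det * (if c' j = c j then (1 : K) else 0) := by
                intro j
                rw [Matrix.adjugate_mul, Matrix.smul_apply, Matrix.one_apply, smul_eq_mul]
                congr 1
                exact if_congr eq_comm rfl rfl
              rw [Finset.prod_congr rfl fun j _ => hent j, Finset.prod_mul_distrib]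
          _ = dz * T (e c) := by
              rw [Finset.sum_congr rfl fun c' _ => mul_assoc dz _ (T (e c')), ← Finset.mul_sum]
              congr 1
              exact deltaSum (fun c' => T (e c')) c
      rw [hsum2, ← mul_assoc, inv_mul_cancel₀ hdz, one_mul, hc]
    · rw [stratG, dif_neg h, MvPolynomial.eval_X]
  have hTeq : T = fun a => MvPolynomial.eval x (stratG K k r n s τ a) :=
    funext fun a => (hkey a).symm
  rw [hTeq]
  have hcomp : ∀ q : MvPolynomial (Fin k → Fin n) K,
      MvPolynomial.eval (fun a => MvPolynomial.eval x (stratG K k r n s τ a)) q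
        = MvPolynomial.eval x (MvPolynomial.aeval (stratG K k r n s τ) q) := by
    intro q
    induction q using MvPolynomial.induction_on with
    | C a => simp
    | add p1 p2 hp1 hp2 => simp [hp1, hp2]
    | mul_X p1 i hp1 => simp [hp1]
  rw [hcomp p, hpann, map_zero]

lemma restrict_vanish {K : Type*} [Field K] {k r n : ℕ} (hk : 2 ≤ k) (hrn : r ≤ n)
    (hbig : k * r * n + 2 ≤ (k - 1) * r + r ^ k) :
    ∃ p : MvPolynomial (Fin k → Fin n) K, p ≠ 0 ∧
      ∀ T : TensorK K (fun _ : Fin k => n),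
        RestrictK (unitTensorK K k r) T → MvPolynomial.eval T p = 0 := by
  classical
  have hst : ∀ st : (Fin k → Fin r → Fin n) × (Fin k → Fin r → Fin r),
      ∃ p : MvPolynomial (Fin k → Fin n) K, p ≠ 0 ∧
      ∀ T : TensorK K (fun _ : Fin k => n),
        (∃ A : Fin k → Matrix (Fin r) (Fin n) K,
          (∀ i : Fin k → Fin r, unitTensorK K k r i
              = ∑ a : Fin k → Fin n, (∏ j, A j (i j) (a j)) * T a) ∧
          (∀ (j : Fin k) (i : Fin r), (j : ℕ) + 2 ≤ k → A j i (st.1 j (st.2 j i)) = 1) ∧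
          (∀ j, IsUnit (Matrix.det (Matrix.of fun i i' => A j i (st.1 j i'))))) →
        MvPolynomial.eval T p = 0 := by
    intro st
    by_cases hsinj : ∀ j, Function.Injective (st.1 j)
    · exact stratum_vanish hrn st.1 st.2 hsinj hbig
    · refine ⟨1, one_ne_zero, ?_⟩
      rintro T ⟨A, _, _, hdet⟩
      push_neg at hsinj
      obtain ⟨j, hj⟩ := hsinj
      rw [Function.not_injective_iff] at hj
      obtain ⟨c1, c2, hceq, hcne⟩ := hj
      have hdet0 : (Matrix.of fun i i' => A j i (st.1 j i')).det = 0 := by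
        rw [← Matrix.det_transpose]
        refine Matrix.det_zero_of_row_eq hcne ?_
        funext i
        show A j i (st.1 j c1) = A j i (st.1 j c2)
        rw [hceq]
      exact ((isUnit_iff_ne_zero.mp (hdet j)) hdet0).elim
  choose ps hps0 hpsvan using hst
  refine ⟨∏ st, ps st, Finset.prod_ne_zero_iff.mpr fun st _ => hps0 st, ?_⟩
  intro T hT
  obtain ⟨s, τ, A, hres, hsinj, hnorm, hdet⟩ := normalize_witness hk hT
  rw [map_prod]
  exact Finset.prod_eq_zero (Finset.mem_univ (s, τ))
    (hpsvan (s, τ) T ⟨A, hres, hnorm, hdet⟩)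

lemma restrict_unit_dsum {K : Type*} [Field K] {k n : ℕ} (hk : 0 < k)
    (S T : TensorK K (fun _ : Fin k => n))
    (hST : ∀ i, S i + T i = unitTensorK K k n i) :
    RestrictK (unitTensorK K k n) (dsumK S T) := by
  classical
  refine ⟨fun _ => Matrix.of fun (i : Fin n) (a : Fin (2 * n)) =>
    if (a : ℕ) = (i : ℕ) ∨ (a : ℕ) = n + (i : ℕ) then (1 : K) else 0, fun i => ?_⟩
  have hsplit : ∀ (j : Fin k) (a : Fin k → Fin (2 * n)),
      (if (a j : ℕ) = (i j : ℕ) ∨ (a j : ℕ) = n + (i j : ℕ) then (1 : K) else 0)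
        = (if a j = (⟨(i j : ℕ), by have hlt : ((i j : ℕ)) < n := (i j).isLt; omega⟩ : Fin (2 * n)) then (1 : K) else 0)
          + (if a j = (⟨n + (i j : ℕ), by have hlt : ((i j : ℕ)) < n := (i j).isLt; omega⟩ : Fin (2 * n)) then (1 : K)
            else 0) := by
    intro j a
    have hne : ((i j : ℕ)) ≠ n + (i j : ℕ) := by have hlt : ((i j : ℕ)) < n := (i j).isLt; omega
    by_cases h1 : (a j : ℕ) = (i j : ℕ)
    · rw [if_pos (Or.inl h1), if_pos (Fin.ext h1), if_neg (fun hc => hne (by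
        have h9 : ((a j : ℕ)) = n + ((i j : ℕ)) := congrArg Fin.val hc
        omega)), add_zero]
    · by_cases h2 : (a j : ℕ) = n + (i j : ℕ)
      · rw [if_pos (Or.inr h2), if_neg (fun hc => h1 (congrArg Fin.val hc)),
          if_pos (Fin.ext h2), zero_add]
      · rw [if_neg (by tauto), if_neg (fun hc => h1 (congrArg Fin.val hc)),
          if_neg (fun hc => h2 (congrArg Fin.val hc)), add_zero]
  have step1 : ∀ a : Fin k → Fin (2 * n),
      (∏ j, (Matrix.of fun (i' : Fin n) (a' : Fin (2 * n)) =>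
          if (a' : ℕ) = (i' : ℕ) ∨ (a' : ℕ) = n + (i' : ℕ) then (1 : K) else 0) (i j) (a j))
      = ∑ t : Finset (Fin k), ∏ j, (if a j = (if j ∈ t
          then (⟨(i j : ℕ), by have hlt : ((i j : ℕ)) < n := (i j).isLt; omega⟩ : Fin (2 * n))
          else (⟨n + (i j : ℕ), by have hlt : ((i j : ℕ)) < n := (i j).isLt; omega⟩ : Fin (2 * n))) then (1 : K)
          else 0) := by
    intro a
    simp only [Matrix.of_apply]
    rw [Finset.prod_congr rfl fun j _ => hsplit j a]
    rw [Fintype.prod_add]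
    refine Finset.sum_congr rfl fun t _ => ?_
    rw [← Finset.prod_mul_prod_compl t]
    congr 1
    · exact Finset.prod_congr rfl fun j hj => by rw [if_pos hj]
    · exact Finset.prod_congr rfl fun j hj => by
        rw [if_neg (Finset.mem_compl.mp hj)]
  rw [Finset.sum_congr rfl fun a _ => by rw [step1 a, Finset.sum_mul]]
  rw [Finset.sum_comm]
  have step2 : ∀ t : Finset (Fin k),
      ∑ a : Fin k → Fin (2 * n), (∏ j, (if a j = (if j ∈ t
          then (⟨(i j : ℕ), by have hlt : ((i j : ℕ)) < n := (i j).isLt; omega⟩ : Fin (2 * n))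
          else (⟨n + (i j : ℕ), by have hlt : ((i j : ℕ)) < n := (i j).isLt; omega⟩ : Fin (2 * n))) then (1 : K)
          else 0)) * dsumK S T a
      = dsumK S T (fun j => if j ∈ t
          then (⟨(i j : ℕ), by have hlt : ((i j : ℕ)) < n := (i j).isLt; omega⟩ : Fin (2 * n))
          else (⟨n + (i j : ℕ), by have hlt : ((i j : ℕ)) < n := (i j).isLt; omega⟩ : Fin (2 * n))) := by
    intro t
    exact deltaSum (m := fun _ : Fin k => 2 * n) (dsumK S T) _
  rw [Finset.sum_congr rfl fun t _ => step2 t]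
  have step3 : ∀ t : Finset (Fin k),
      dsumK S T (fun j => if j ∈ t
          then (⟨(i j : ℕ), by have hlt : ((i j : ℕ)) < n := (i j).isLt; omega⟩ : Fin (2 * n))
          else (⟨n + (i j : ℕ), by have hlt : ((i j : ℕ)) < n := (i j).isLt; omega⟩ : Fin (2 * n)))
      = (if t = Finset.univ then S i else 0) + (if t = ∅ then T i else 0) := by
    intro t
    by_cases ht : t = Finset.univ
    · subst ht
      rw [if_pos rfl, if_neg (by
        intro hc
        exact absurd (hc ▸ Finset.mem_univ (⟨0, hk⟩ : Fin k)) (Finset.notMem_empty _)), add_zero]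
      rw [dsumK, dif_pos (fun j => by rw [if_pos (Finset.mem_univ j)]; exact (i j).isLt)]
      congr 1
      funext j
      apply Fin.ext
      simp [Finset.mem_univ]
    · by_cases ht0 : t = ∅
      · subst ht0
        rw [if_neg ht, if_pos rfl, zero_add]
        rw [dsumK, dif_neg (by
          push_neg
          refine ⟨⟨0, hk⟩, ?_⟩
          rw [if_neg (Finset.notMem_empty _)]
          simp), dif_pos (fun j => by rw [if_neg (Finset.notMem_empty _)]; simp)]
        congr 1
        funext j
        apply Fin.ext
        simp
      · rw [if_neg ht, if_neg ht0, add_zero]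
        obtain ⟨j1, hj1⟩ := Finset.nonempty_iff_ne_empty.mpr ht0
        have hj2 : ∃ j2, j2 ∉ t := by
          by_contra hc
          push_neg at hc
          exact ht (Finset.eq_univ_iff_forall.mpr hc)
        obtain ⟨j2, hj2⟩ := hj2
        rw [dsumK]
        rw [dif_neg (by
          intro hc
          have h5 := hc j2
          rw [if_neg hj2] at h5
          have h6 : n + ((i j2 : ℕ)) < n := h5
          omega)]
        rw [dif_neg (by
          intro hc
          have h5 := hc j1
          rw [if_pos hj1] at h5
          have h6 : n ≤ ((i j1 : ℕ)) := h5
          have h7 : ((i j1 : ℕ)) < n := (i j1).isLt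
          omega)]
  rw [Finset.sum_congr rfl fun t _ => step3 t]
  rw [Finset.sum_add_distrib]
  rw [Finset.sum_ite_eq' Finset.univ (Finset.univ : Finset (Fin k)) (fun _ => S i)]
  rw [Finset.sum_ite_eq' Finset.univ (∅ : Finset (Fin k)) (fun _ => T i)]
  rw [if_pos (Finset.mem_univ _), if_pos (Finset.mem_univ _), ← hST i]

lemma eval_aeval' {K : Type*} [CommRing K] {σ τ : Type*} (x : τ → K)
    (v : σ → MvPolynomial τ K) (q : MvPolynomial σ K) :
    MvPolynomial.eval x (MvPolynomial.aeval v q)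
      = MvPolynomial.eval (fun a => MvPolynomial.eval x (v a)) q := by
  induction q using MvPolynomial.induction_on with
  | C a => simp
  | add p1 p2 h1 h2 => rw [map_add, map_add, map_add, h1, h2]
  | mul_X p1 a h1 => rw [map_mul, map_mul, map_mul, h1, MvPolynomial.aeval_X,
      MvPolynomial.eval_X]


/-- Subrank of `k`-tensors is not additive under the direct sum: there are
`S, T` in `K^{n,…,n}` with `Q(S)^{k−1}, Q(T)^{k−1} ≤ kn − (k−1)` while
`Q(S ⊕ T) ≥ n`. -/
theorem subrank_not_additive_k (K : Type*) [Field K] [IsAlgClosed K]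
    (k : ℕ) (hk : 3 ≤ k) (n : ℕ) (hn : 0 < n) :
    ∃ S T : TensorK K (fun _ : Fin k => n),
      (subrankK S) ^ (k - 1) ≤ k * n - (k - 1) ∧
      (subrankK T) ^ (k - 1) ≤ k * n - (k - 1) ∧
      n ≤ subrankK (dsumK S T) := by
  classical
  have hk2 : 2 ≤ k := by omega
  have hkn : k ≤ k * n := Nat.le_mul_of_pos_right k hn
  set g := k * n - (k - 1) with hg
  have hg1 : 1 ≤ g := by omega
  set f := Nat.findGreatest (fun m => m ^ (k - 1) ≤ g) g with hf
  have hf1 : 1 ≤ f := Nat.le_findGreatest (P := fun m => m ^ (k - 1) ≤ g) hg1 (by simpa using hg1)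
  have hfle : f ^ (k - 1) ≤ g := Nat.findGreatest_spec (P := fun m => m ^ (k - 1) ≤ g) hg1 (by simpa using hg1)
  have hfg : g < (f + 1) ^ (k - 1) := by
    by_cases hle : f + 1 ≤ g
    · have hng := Nat.findGreatest_is_greatest (P := fun m => m ^ (k - 1) ≤ g)
        (show Nat.findGreatest (fun m => m ^ (k - 1) ≤ g) g < f + 1 by omega) hle
      exact Nat.lt_of_not_le (by simpa using hng)
    · have hfg' : f ≤ g := Nat.findGreatest_le g
      have hfeq : f = g := by omega
      calc g < g + 1 := Nat.lt_succ_self g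
        _ ≤ (g + 1) ^ (k - 1) := Nat.le_self_pow (by omega) _
        _ = (f + 1) ^ (k - 1) := by rw [hfeq]
  set r := f + 1 with hr
  have hr2 : 2 ≤ r := by omega
  have hvanish : ∃ p : MvPolynomial (Fin k → Fin n) K, p ≠ 0 ∧
      ∀ T : TensorK K (fun _ : Fin k => n), RestrictK (unitTensorK K k r) T →
        MvPolynomial.eval T p = 0 := by
    by_cases hrn : r ≤ n
    · refine restrict_vanish hk2 hrn ?_
      have h1 : k * n + 2 ≤ r ^ (k - 1) + k := by omega
      have h2 : (k * n + 2) * r ≤ (r ^ (k - 1) + k) * r := Nat.mul_le_mul_right r h1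
      have h3 : r ^ (k - 1) * r = r ^ k := by
        rw [← pow_succ]
        congr 1
        omega
      have h4 : k * n * r + 2 * r ≤ r ^ k + k * r := by
        calc k * n * r + 2 * r = (k * n + 2) * r := by ring
          _ ≤ (r ^ (k - 1) + k) * r := h2
          _ = r ^ k + k * r := by rw [add_mul, h3]
      have h5 : k * r * n = k * n * r := by ring
      have h6 : (k - 1) * r + r = k * r := by
        have h7 : (k - 1) * r = k * r - 1 * r := by rw [Nat.sub_mul]
        have h8 : r ≤ k * r := Nat.le_mul_of_pos_left r (by omega)
        omega
      omega
    · refine ⟨MvPolynomial.X (fun _ => (⟨0, hn⟩ : Fin n)), MvPolynomial.X_ne_zero _, ?_⟩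
      intro T hT
      exact absurd (le_of_restrict_unit hk2 hT ⟨0, by omega⟩) (by omega)
  obtain ⟨p, hp0, hpvan⟩ := hvanish
  set φ : MvPolynomial (Fin k → Fin n) K →ₐ[K] MvPolynomial (Fin k → Fin n) K :=
    MvPolynomial.aeval (fun a => MvPolynomial.C (unitTensorK K k n a) - MvPolynomial.X a)
    with hφ
  have hXa : ∀ a, φ (MvPolynomial.X a)
      = MvPolynomial.C (unitTensorK K k n a) - MvPolynomial.X a := fun a => by
    rw [hφ, MvPolynomial.aeval_X]
  have hCa : ∀ y : K, φ (MvPolynomial.C y) = MvPolynomial.C y := fun y => by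
    rw [hφ, MvPolynomial.aeval_C, MvPolynomial.algebraMap_eq]
  have hφφ : ∀ q, φ (φ q) = q := by
    intro q
    induction q using MvPolynomial.induction_on with
    | C y => rw [hCa, hCa]
    | add p1 p2 h1 h2 => rw [map_add, map_add, h1, h2]
    | mul_X p1 a h1 => rw [map_mul, map_mul, h1, hXa, map_sub, hXa, hCa, sub_sub_cancel]
  have hφp0 : φ p ≠ 0 := fun hc => hp0 (by rw [← hφφ p, hc, map_zero])
  have hq0 : p * φ p ≠ 0 := mul_ne_zero hp0 hφp0
  have hpt : ∃ x : (Fin k → Fin n) → K, MvPolynomial.eval x (p * φ p) ≠ 0 := by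
    by_contra hc
    push_neg at hc
    exact hq0 (MvPolynomial.funext fun x => by rw [hc x, map_zero])
  obtain ⟨S0, hS0⟩ := hpt
  rw [map_mul] at hS0
  have hSp : MvPolynomial.eval S0 p ≠ 0 := fun h => hS0 (by rw [h, zero_mul])
  set S : TensorK K (fun _ : Fin k => n) := S0 with hS
  set T : TensorK K (fun _ : Fin k => n) := fun i => unitTensorK K k n i - S i with hT
  have hTp : MvPolynomial.eval (T : (Fin k → Fin n) → K) p ≠ 0 := by
    have heq : MvPolynomial.eval S0 (φ p)
        = MvPolynomial.eval (T : (Fin k → Fin n) → K) p := by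
      rw [hφ, eval_aeval']
      have hpt : (fun a => MvPolynomial.eval S0
          (MvPolynomial.C (unitTensorK K k n a) - MvPolynomial.X a))
          = (T : (Fin k → Fin n) → K) := by
        funext a
        simp [hT, hS]
      rw [hpt]
    intro h
    rw [heq, h, mul_zero] at hS0
    exact hS0 rfl
  have hub : ∀ (X : TensorK K (fun _ : Fin k => n)),
      MvPolynomial.eval (X : (Fin k → Fin n) → K) p ≠ 0 →
      (subrankK X) ^ (k - 1) ≤ k * n - (k - 1) := by
    intro X hX
    have hmem : ∀ m ∈ {m : ℕ | RestrictK (unitTensorK K k m) X}, m ≤ f := by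
      intro m hm
      by_contra hc
      push_neg at hc
      have hres : RestrictK (unitTensorK K k r) X :=
        RestrictK.trans (restrict_unit_mono (by omega)) hm
      exact hX (hpvan X hres)
    have hsub : subrankK X ≤ f :=
      csSup_le ⟨0, restrict_unit_zero (by omega) X⟩ hmem
    calc (subrankK X) ^ (k - 1) ≤ f ^ (k - 1) := Nat.pow_le_pow_left hsub _
      _ ≤ g := hfle
  have hdsum : RestrictK (unitTensorK K k n) (dsumK S T) :=
    restrict_unit_dsum (by omega) S T (fun i => by rw [hT]; ring)
  have hlow : n ≤ subrankK (dsumK S T) :=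
    le_csSup (bddAbove_subrank_set hk2 (dsumK S T)) hdsum
  exact ⟨S, T, hub S hSp, hub T hTp, hlow⟩
end

section
/- Let K be a field and n = 2m an even positive integer. There do not exist linear subspaces R, C ⊆ K^n, each of dimension m, such that every n×n matrix M over K can be written as M = A + B where every row of A (viewed as a vector in K^n) lies in R and every column of B (viewed as a vector in K^n) lies in C. -/
/-- The submodule `Π i, p` inside a pi type is linearly equivalent to `Fin n → p`. -/
def piSubEquiv (K : Type*) [Field K] {n : ℕ} (p : Submodule K (Fin n → K)) :
    ↥(Submodule.pi (Set.univ : Set (Fin n)) (fun _ => p)) ≃ₗ[K] (Fin n → ↥p) where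
  toFun A := fun i => ⟨A.1 i, A.2 i (Set.mem_univ i)⟩
  invFun f := ⟨fun i => (f i).1, fun i _ => (f i).2⟩
  map_add' _ _ := rfl
  map_smul' _ _ := rfl
  left_inv _ := rfl
  right_inv _ := rfl

lemma finrank_piSub (K : Type*) [Field K] {n : ℕ} (p : Submodule K (Fin n → K)) :
    Module.finrank K ↥(Submodule.pi (Set.univ : Set (Fin n)) (fun _ => p))
      = n * Module.finrank K p := by
  rw [(piSubEquiv K p).finrank_eq, Module.finrank_pi_fintype]
  simp [Finset.sum_const]

lemma exists_ne_zero_of_finrank_pos {K : Type*} [Field K] {n : ℕ}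
    {p : Submodule K (Fin n → K)} (h : 0 < Module.finrank K p) :
    ∃ v ∈ p, v ≠ 0 := by
  have hb : p ≠ ⊥ := by
    intro hbot
    rw [hbot, finrank_bot] at h
    exact lt_irrefl 0 h
  obtain ⟨v, hv, hv0⟩ := Submodule.exists_mem_ne_zero_of_ne_bot hb
  exact ⟨v, hv, hv0⟩

/-- For `n = 2m` even, there are no subspaces `R, C ⊆ K^n` of dimension `m = n/2` such
that every `n × n` matrix `M` can be written as `M = A + B` with all rows of `A` in `R`
and all columns of `B` in `C`. -/
theorem no_matrix_space_decomposition (K : Type*) [Field K] (m : ℕ) (hm : 0 < m) :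
    ¬ ∃ (R C : Submodule K (Fin (2 * m) → K)),
        Module.finrank K R = m ∧ Module.finrank K C = m ∧
        ∀ M : Matrix (Fin (2 * m)) (Fin (2 * m)) K,
          ∃ A B : Matrix (Fin (2 * m)) (Fin (2 * m)) K,
            M = A + B ∧ (∀ i, (fun j => A i j) ∈ R) ∧ (∀ j, (fun i => B i j) ∈ C) := by
  rintro ⟨R, C, hR, hC, hdec⟩
  -- the space of matrices with all rows in R
  set S₁ : Submodule K (Matrix (Fin (2 * m)) (Fin (2 * m)) K) :=
    Submodule.pi (Set.univ : Set (Fin (2 * m))) (fun _ => R) with hS₁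
  -- the space of matrices with all columns in C
  set S₂ : Submodule K (Matrix (Fin (2 * m)) (Fin (2 * m)) K) :=
    Submodule.comap (Matrix.transposeLinearEquiv (Fin (2 * m)) (Fin (2 * m)) K K).toLinearMap
      (Submodule.pi (Set.univ : Set (Fin (2 * m))) (fun _ => C)) with hS₂
  have hmemS₁ : ∀ A : Matrix (Fin (2 * m)) (Fin (2 * m)) K,
      (∀ i, (fun j => A i j) ∈ R) → A ∈ S₁ := by
    intro A h i _; exact h i
  have hmemS₂ : ∀ B : Matrix (Fin (2 * m)) (Fin (2 * m)) K,
      (∀ j, (fun i => B i j) ∈ C) → B ∈ S₂ := by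
    intro B h j _; exact h j
  -- S₁ ⊔ S₂ = ⊤
  have hsup : S₁ ⊔ S₂ = ⊤ := by
    rw [Submodule.eq_top_iff']
    intro M
    obtain ⟨A, B, hMAB, hA, hB⟩ := hdec M
    rw [hMAB]
    exact Submodule.add_mem_sup (hmemS₁ A hA) (hmemS₂ B hB)
  -- ranks of S₁ and S₂
  have hr₁ : Module.finrank K S₁ = 2 * m * m := by
    have h := finrank_piSub K R
    rw [hR] at h
    exact h
  have hr₂ : Module.finrank K S₂ = 2 * m * m := by
    have h0 := finrank_piSub K C
    rw [hC] at h0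
    have h1 : Module.finrank K S₂
        = Module.finrank K ↥(Submodule.pi (Set.univ : Set (Fin (2 * m))) (fun _ => C)) := by
      refine LinearEquiv.finrank_eq ?_
      exact LinearEquiv.ofSubmodule' _ _
    rw [h1]
    exact h0
  -- a nonzero matrix in S₁ ⊓ S₂ : outer product of c ∈ C and r ∈ R
  obtain ⟨r, hrR, hr0⟩ : ∃ r ∈ R, r ≠ 0 :=
    exists_ne_zero_of_finrank_pos (by rw [hR]; exact hm)
  obtain ⟨c, hcC, hc0⟩ : ∃ c ∈ C, c ≠ 0 :=
    exists_ne_zero_of_finrank_pos (by rw [hC]; exact hm)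
  set M₀ : Matrix (Fin (2 * m)) (Fin (2 * m)) K := fun i j => c i * r j with hM₀
  have hM₀S₁ : M₀ ∈ S₁ := by
    apply hmemS₁; intro i
    have : (fun j => M₀ i j) = c i • r := by funext j; simp [hM₀, smul_eq_mul]
    rw [this]; exact R.smul_mem _ hrR
  have hM₀S₂ : M₀ ∈ S₂ := by
    apply hmemS₂; intro j
    have : (fun i => M₀ i j) = r j • c := by
      funext i; simp [hM₀, smul_eq_mul, mul_comm]
    rw [this]; exact C.smul_mem _ hcC
  have hM₀ne : M₀ ≠ 0 := by
    obtain ⟨i, hi⟩ := Function.ne_iff.mp hc0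
    obtain ⟨j, hj⟩ := Function.ne_iff.mp hr0
    intro h
    have := congrFun (congrFun h i) j
    simp [hM₀] at this
    rcases this with h' | h' <;> [exact hi h'; exact hj h']
  have hinf : 0 < Module.finrank K ↥(S₁ ⊓ S₂) := by
    rw [Module.finrank_pos_iff_exists_ne_zero]
    refine ⟨⟨M₀, hM₀S₁, hM₀S₂⟩, ?_⟩
    intro h
    exact hM₀ne (by simpa using congrArg Subtype.val h)
  -- dimension count
  have hkey := Submodule.finrank_sup_add_finrank_inf_eq S₁ S₂
  rw [hsup, hr₁, hr₂, finrank_top, Module.finrank_matrix] at hkey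
  simp only [Fintype.card_fin, Module.finrank_self, mul_one] at hkey
  have hmul : 2 * m * (2 * m) = 2 * m * m + 2 * m * m := by ring
  rw [hmul] at hkey
  omega
end

section
/- Let K be an infinite field, d ≥ 2 an integer, n₁,…,n_{d−1}, n_d′, n_d″ positive integers, and a_d, a₁′,…,a_{d−1}′, a₁″,…,a_{d−1}″ nonnegative integers. Suppose there exists a linear subspace W_d ⊆ K^{n₁,…,n_{d−1}} of dimension a_d, subspaces W_i′ (i = 1,…,d−1) of the order-(d−1) tensor space of format (n₁,…,n_{i−1},n_{i+1},…,n_{d−1},n_d′) with dim W_i′ = a_i′ such that W₁′[1] + ⋯ + W_{d−1}′[d−1] + W_d[d] = K^{n₁,…,n_{d−1},n_d′}, and subspaces W_i″ (i = 1,…,d−1) of the order-(d−1) tensor space of format (n₁,…,n_{i−1},n_{i+1},…,n_{d−1},n_d″) with dim W_i″ = a_i″ such that W₁″[1] + ⋯ + W_{d−1}″[d−1] + W_d[d] = K^{n₁,…,n_{d−1},n_d″}. Then there exist subspaces W_i (i = 1,…,d−1) of the order-(d−1) tensor spaces of format (n₁,…,n_{i−1},n_{i+1},…,n_{d−1},n_d′+n_d″)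 with dim W_i = a_i′ + a_i″ such that W₁[1] + ⋯ + W_{d−1}[d−1] + W_d[d] = K^{n₁,…,n_{d−1},n_d′+n_d″}. (Direct sum construction for tensor space decompositions.) -/
set_option linter.unusedVariables false

/-- For an order-`d` tensor space of format `(n₀, …, n_{d−2}, m)` (written as
`(∀ j : Fin (d−1), Fin (n j)) → Fin m → K`, with the last index separated) and a
subspace `W` of the order-`(d−1)` tensor space of format `(n₀, …, n_{d−2})`, the
subspace `W[d]` of tensors all of whose direction-`d` slices lie in `W`. -/
def lastSlice {K : Type*} [Field K] {s m : ℕ} {n : Fin s → ℕ}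
    (W : Submodule K ((∀ j, Fin (n j)) → K)) :
    Submodule K ((∀ j, Fin (n j)) → Fin m → K) where
  carrier := {T | ∀ c : Fin m, (fun f => T f c) ∈ W}
  add_mem' := fun hS hT c => W.add_mem (hS c) (hT c)
  zero_mem' := fun c => W.zero_mem
  smul_mem' := fun a S hS c => W.smul_mem a (hS c)

/-- For `i` among the first `d−1` directions and a subspace `W` of the order-`(d−1)`
tensor space of format `(n₀, …, n̂ᵢ, …, n_{d−2}, m)`, the subspace `W[i]` of tensors
all of whose direction-`i` slices lie in `W`. -/
def midSlice {K : Type*} [Field K] {e m : ℕ} {n : Fin (e + 1) → ℕ} (i : Fin (e + 1))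
    (W : Submodule K ((∀ j : Fin e, Fin (n (i.succAbove j))) → Fin m → K)) :
    Submodule K ((∀ j, Fin (n j)) → Fin m → K) where
  carrier := {T | ∀ c : Fin (n i), (fun f => T (i.insertNth c f)) ∈ W}
  add_mem' := fun hS hT c => W.add_mem (hS c) (hT c)
  zero_mem' := fun c => W.zero_mem
  smul_mem' := fun a S hS c => W.smul_mem a (hS c)

section Aux
variable {K : Type*} [Field K]

/-- restriction to first block of last index -/
def restr1 (K : Type*) [Field K] (α : Type*) (m m' : ℕ) :
    (α → Fin (m + m') → K) →ₗ[K] (α → Fin m → K) where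
  toFun T := fun f c => T f (Fin.castAdd m' c)
  map_add' _ _ := rfl
  map_smul' _ _ := rfl

/-- restriction to second block of last index -/
def restr2 (K : Type*) [Field K] (α : Type*) (m m' : ℕ) :
    (α → Fin (m + m') → K) →ₗ[K] (α → Fin m' → K) where
  toFun T := fun f c => T f (Fin.natAdd m c)
  map_add' _ _ := rfl
  map_smul' _ _ := rfl

/-- splitting the last index -/
def splitEquiv (K : Type*) [Field K] (α : Type*) (m m' : ℕ) :
    (α → Fin (m + m') → K) ≃ₗ[K] (α → Fin m → K) × (α → Fin m' → K) where
  toFun T := (restr1 K α m m' T, restr2 K α m m' T)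
  invFun P := fun f c => Fin.addCases (fun c' => P.1 f c') (fun c' => P.2 f c') c
  map_add' _ _ := rfl
  map_smul' _ _ := rfl
  left_inv T := by
    funext f c
    cases c using Fin.addCases with
    | left c => simp [restr1]
    | right c => simp [restr2]
  right_inv P := by
    ext f c
    · simp [restr1]
    · simp [restr2]

/-- extension by zero on the second block -/
def ext1 (K : Type*) [Field K] (α : Type*) (m m' : ℕ) :
    (α → Fin m → K) →ₗ[K] (α → Fin (m + m') → K) where
  toFun S := fun f c => Fin.addCases (S f) (fun _ => 0) c
  map_add' S T := by
    funext f c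
    cases c using Fin.addCases with
    | left c => simp
    | right c => simp
  map_smul' a S := by
    funext f c
    cases c using Fin.addCases with
    | left c => simp
    | right c => simp

/-- extension by zero on the first block -/
def ext2 (K : Type*) [Field K] (α : Type*) (m m' : ℕ) :
    (α → Fin m' → K) →ₗ[K] (α → Fin (m + m') → K) where
  toFun S := fun f c => Fin.addCases (fun _ => 0) (S f) c
  map_add' S T := by
    funext f c
    cases c using Fin.addCases with
    | left c => simp
    | right c => simp
  map_smul' a S := by
    funext f c
    cases c using Fin.addCases with
    | left c => simp
    | right c => simp

theorem restr1_ext1 {α : Type*} {m m' : ℕ} (S : α → Fin m → K) :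
    restr1 K α m m' (ext1 K α m m' S) = S := by
  funext f c; simp [restr1, ext1]

theorem restr2_ext1 {α : Type*} {m m' : ℕ} (S : α → Fin m → K) :
    restr2 K α m m' (ext1 K α m m' S) = 0 := by
  funext f c; simp [restr2, ext1]

theorem restr1_ext2 {α : Type*} {m m' : ℕ} (S : α → Fin m' → K) :
    restr1 K α m m' (ext2 K α m m' S) = 0 := by
  funext f c; simp [restr1, ext2]

theorem restr2_ext2 {α : Type*} {m m' : ℕ} (S : α → Fin m' → K) :
    restr2 K α m m' (ext2 K α m m' S) = S := by
  funext f c; simp [restr2, ext2]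

/-- prod submodule equiv -/
def prodSubEquiv {M N : Type*} [AddCommGroup M] [AddCommGroup N] [Module K M] [Module K N]
    (p : Submodule K M) (q : Submodule K N) : (p.prod q) ≃ₗ[K] p × q where
  toFun x := (⟨x.1.1, x.2.1⟩, ⟨x.1.2, x.2.2⟩)
  invFun y := ⟨(y.1.1, y.2.1), y.1.2, y.2.2⟩
  map_add' _ _ := rfl
  map_smul' _ _ := rfl
  left_inv _ := rfl
  right_inv _ := rfl

theorem midSlice_mono {e m : ℕ} {n : Fin (e + 1) → ℕ} (i : Fin (e + 1))
    {V V' : Submodule K ((∀ j : Fin e, Fin (n (i.succAbove j))) → Fin m → K)}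
    (h : V ≤ V') : midSlice i V ≤ midSlice i V' :=
  fun _ hT c => h (hT c)

theorem midSlice_map_ext1 {e m m' : ℕ} {n : Fin (e + 1) → ℕ} (i : Fin (e + 1))
    (V : Submodule K ((∀ j : Fin e, Fin (n (i.succAbove j))) → Fin m → K)) :
    Submodule.map (ext1 K _ m m') (midSlice i V) ≤
      midSlice i (Submodule.map (ext1 K _ m m') V) := by
  rintro _ ⟨S, hS, rfl⟩ c
  exact ⟨fun f => S (i.insertNth c f), hS c, rfl⟩

theorem midSlice_map_ext2 {e m m' : ℕ} {n : Fin (e + 1) → ℕ} (i : Fin (e + 1))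
    (V : Submodule K ((∀ j : Fin e, Fin (n (i.succAbove j))) → Fin m' → K)) :
    Submodule.map (ext2 K _ m m') (midSlice i V) ≤
      midSlice i (Submodule.map (ext2 K _ m m') V) := by
  rintro _ ⟨S, hS, rfl⟩ c
  exact ⟨fun f => S (i.insertNth c f), hS c, rfl⟩

theorem lastSlice_map_ext1 {s m m' : ℕ} {n : Fin s → ℕ}
    (Wd : Submodule K ((∀ j, Fin (n j)) → K)) :
    Submodule.map (ext1 K _ m m') (lastSlice (m := m) Wd) ≤ lastSlice (m := m + m') Wd := by
  rintro _ ⟨S, hS, rfl⟩ c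
  cases c using Fin.addCases with
  | left c => simpa [ext1] using hS c
  | right c =>
      have : (fun f => ext1 K _ m m' S f (Fin.natAdd m c)) = (0 : (∀ j, Fin (n j)) → K) := by
        funext f; simp [ext1]
      rw [this]; exact Wd.zero_mem
  
theorem lastSlice_map_ext2 {s m m' : ℕ} {n : Fin s → ℕ}
    (Wd : Submodule K ((∀ j, Fin (n j)) → K)) :
    Submodule.map (ext2 K _ m m') (lastSlice (m := m') Wd) ≤ lastSlice (m := m + m') Wd := by
  rintro _ ⟨S, hS, rfl⟩ c
  cases c using Fin.addCases with
  | left c =>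
      have : (fun f => ext2 K _ m m' S f (Fin.castAdd m' c)) = (0 : (∀ j, Fin (n j)) → K) := by
        funext f; simp [ext2]
      rw [this]; exact Wd.zero_mem
  | right c => simpa [ext2] using hS c

end Aux

/-- Direct sum construction for tensor space decompositions, for tensors of order
`d = e + 2 ≥ 2` with the first `d − 1` side lengths given by `n : Fin (e+1) → ℕ` and
last side length `nd′` resp. `nd″`: two decompositions sharing the same last-direction
subspace `W_d` combine to a decomposition with last side length `nd′ + nd″`. -/
theorem direct_sum_construction (K : Type*) [Field K] [Infinite K]
    (e : ℕ) (n : Fin (e + 1) → ℕ) (hn : ∀ j, 0 < n j)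
    (nd' nd'' : ℕ) (hnd' : 0 < nd') (hnd'' : 0 < nd'')
    (ad : ℕ) (a' a'' : Fin (e + 1) → ℕ)
    (Wd : Submodule K ((∀ j, Fin (n j)) → K))
    (hWd : Module.finrank K Wd = ad)
    (W' : ∀ i : Fin (e + 1),
      Submodule K ((∀ j : Fin e, Fin (n (i.succAbove j))) → Fin nd' → K))
    (hW' : ∀ i, Module.finrank K (W' i) = a' i)
    (hsum' : (⨆ i, midSlice i (W' i)) ⊔ lastSlice (m := nd') Wd = ⊤)
    (W'' : ∀ i : Fin (e + 1),
      Submodule K ((∀ j : Fin e, Fin (n (i.succAbove j))) → Fin nd'' → K))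
    (hW'' : ∀ i, Module.finrank K (W'' i) = a'' i)
    (hsum'' : (⨆ i, midSlice i (W'' i)) ⊔ lastSlice (m := nd'') Wd = ⊤) :
    ∃ W : ∀ i : Fin (e + 1),
        Submodule K ((∀ j : Fin e, Fin (n (i.succAbove j))) → Fin (nd' + nd'') → K),
      (∀ i, Module.finrank K (W i) = a' i + a'' i) ∧
      (⨆ i, midSlice i (W i)) ⊔ lastSlice (m := nd' + nd'') Wd = ⊤ := by
  set W : ∀ i : Fin (e + 1),
      Submodule K ((∀ j : Fin e, Fin (n (i.succAbove j))) → Fin (nd' + nd'') → K) :=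
    fun i => Submodule.comap
      (splitEquiv K (∀ j : Fin e, Fin (n (i.succAbove j))) nd' nd'').toLinearMap
      ((W' i).prod (W'' i)) with hW
  refine ⟨W, fun i => ?_, ?_⟩
  · -- dimension count
    have h1 : W i = Submodule.map
        (splitEquiv K (∀ j : Fin e, Fin (n (i.succAbove j))) nd' nd'').symm.toLinearMap
        ((W' i).prod (W'' i)) := by
      rw [Submodule.map_equiv_eq_comap_symm, LinearEquiv.symm_symm]
    rw [h1, LinearEquiv.finrank_map_eq,
      LinearEquiv.finrank_eq (prodSubEquiv (W' i) (W'' i)),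
      Module.finrank_prod, hW' i, hW'' i]
  · -- spanning
    rw [eq_top_iff]
    intro T _
    have hdec : T = ext1 K (∀ j : Fin (e + 1), Fin (n j)) nd' nd'' (restr1 K (∀ j : Fin (e + 1), Fin (n j)) nd' nd'' T)
        + ext2 K (∀ j : Fin (e + 1), Fin (n j)) nd' nd'' (restr2 K (∀ j : Fin (e + 1), Fin (n j)) nd' nd'' T) := by
      funext f c
      cases c using Fin.addCases with
      | left c => simp [ext1, ext2, restr1]
      | right c => simp [ext1, ext2, restr2]
    have hmap1 : ∀ i, Submodule.map (ext1 K _ nd' nd'') (W' i) ≤ W i := by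
      rintro i _ ⟨S, hS, rfl⟩
      refine Submodule.mem_comap.mpr ?_
      have : (splitEquiv K _ nd' nd'').toLinearMap (ext1 K _ nd' nd'' S)
          = (S, 0) := by
        simp only [LinearEquiv.coe_coe, splitEquiv, LinearEquiv.coe_mk, LinearMap.coe_mk,
          AddHom.coe_mk]
        exact Prod.ext (restr1_ext1 S) (restr2_ext1 S)
      rw [this]
      exact ⟨hS, (W'' i).zero_mem⟩
    have hmap2 : ∀ i, Submodule.map (ext2 K _ nd' nd'') (W'' i) ≤ W i := by
      rintro i _ ⟨S, hS, rfl⟩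
      refine Submodule.mem_comap.mpr ?_
      have : (splitEquiv K _ nd' nd'').toLinearMap (ext2 K _ nd' nd'' S)
          = (0, S) := by
        simp only [LinearEquiv.coe_coe, splitEquiv, LinearEquiv.coe_mk, LinearMap.coe_mk,
          AddHom.coe_mk]
        exact Prod.ext (restr1_ext2 S) (restr2_ext2 S)
      rw [this]
      exact ⟨(W' i).zero_mem, hS⟩
    have key1 : Submodule.map (ext1 K (∀ j : Fin (e + 1), Fin (n j)) nd' nd'')
        ((⨆ i, midSlice i (W' i)) ⊔ lastSlice (m := nd') Wd) ≤
        (⨆ i, midSlice i (W i)) ⊔ lastSlice (m := nd' + nd'') Wd := by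
      rw [Submodule.map_sup, Submodule.map_iSup]
      refine sup_le_sup (iSup_mono fun i => ?_) (lastSlice_map_ext1 Wd)
      exact le_trans (midSlice_map_ext1 i (W' i)) (midSlice_mono i (hmap1 i))
    have key2 : Submodule.map (ext2 K (∀ j : Fin (e + 1), Fin (n j)) nd' nd'')
        ((⨆ i, midSlice i (W'' i)) ⊔ lastSlice (m := nd'') Wd) ≤
        (⨆ i, midSlice i (W i)) ⊔ lastSlice (m := nd' + nd'') Wd := by
      rw [Submodule.map_sup, Submodule.map_iSup]
      refine sup_le_sup (iSup_mono fun i => ?_) (lastSlice_map_ext2 Wd)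
      exact le_trans (midSlice_map_ext2 i (W'' i)) (midSlice_mono i (hmap2 i))
    rw [hdec]
    refine Submodule.add_mem _ (key1 ⟨_, ?_, rfl⟩) (key2 ⟨_, ?_, rfl⟩)
    · rw [hsum']; trivial
    · rw [hsum'']; trivial
end

section
/- Let K be an infinite field. There exist a linear subspace X₁ ⊆ Mat_{2,2} of dimension 3 and a linear subspace X₃ ⊆ Mat_{2,2} of dimension 1 such that X₁[1] + X₃[3] = K^{2,2,2}. (For instance, X₁ the space of symmetric 2×2 matrices and X₃ the span of the identity matrix.) -/
set_option linter.unusedVariables false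

/-- Antisymmetry functional on 2×2 matrices. -/
def asym (K : Type*) [Field K] : Matrix (Fin 2) (Fin 2) K →ₗ[K] K where
  toFun M := M 0 1 - M 1 0
  map_add' := by intro M N; simp [Matrix.add_apply]; ring
  map_smul' := by intro a M; simp [Matrix.smul_apply]; ring

/-- There exist a 3-dimensional subspace `X₁ ⊆ Mat_{2,2}` and a 1-dimensional subspace
`X₃ ⊆ Mat_{2,2}` such that `X₁[1] + X₃[3] = K^{2,2,2}`. -/
theorem tensor_space_decomposition_222 (K : Type*) [Field K] [Infinite K] :
    ∃ (X₁ X₃ : Submodule K (Matrix (Fin 2) (Fin 2) K)),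
      Module.finrank K X₁ = 3 ∧ Module.finrank K X₃ = 1 ∧
      sliceSub1 (n₁ := 2) X₁ ⊔ sliceSub3 (n₃ := 2) X₃ = ⊤ := by
  classical
  refine ⟨LinearMap.ker (asym K), K ∙ (1 : Matrix (Fin 2) (Fin 2) K), ?_, ?_, ?_⟩
  · have hsurj : Function.Surjective (asym K) := by
      intro a
      exact ⟨Matrix.of ![![0, a], ![0, 0]], by simp [asym]⟩
    have h := (asym K).finrank_range_add_finrank_ker
    rw [LinearMap.range_eq_top.mpr hsurj, finrank_top, Module.finrank_self] at h
    have hmat : Module.finrank K (Matrix (Fin 2) (Fin 2) K) = 4 := by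
      simp [Module.finrank_matrix]
    omega
  · exact finrank_span_singleton one_ne_zero
  · rw [eq_top_iff]
    intro T _
    set c : Fin 2 → K := ![T (1,1,0) - T (1,0,1), T (0,0,1) - T (0,1,0)] with hc
    set C : Tensor3 K 2 2 2 := fun p => if p.1 = p.2.1 then c p.2.2 else 0 with hC
    refine Submodule.mem_sup.mpr ⟨fun p => T p - C p, ?_, C, ?_, by funext p; simp⟩
    · intro i
      simp only [sliceSub1, Submodule.mem_mk]
      rw [LinearMap.mem_ker]
      fin_cases i <;> simp [asym, hC, hc]
    · intro k
      rw [Submodule.mem_span_singleton]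
      refine ⟨c k, ?_⟩
      ext i j
      simp [Matrix.one_apply, hC, mul_comm]
end
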